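/- arXiv:2602.22201 — 4 statements merged into one kernel-verified Lean document; each statement's English description precedes it below -/
import Mathlib

section
/- Let n ≥ 1, let U ∈ U(2^n) be a unitary, and let k ≥ 2. If the controlled gate CU lies in the k-th level 𝒞_k^{(n+1)} of the (n+1)-qubit Clifford hierarchy, then U^{2^{k-2}} lies in the n-qubit Pauli group 𝒫_n up to a global phase, and moreover U ∈ 𝒞_k^{(n)}. -/
open Matrix

/-- Index type for the computational basis of `n` qubits. -/
abbrev QIdx (n : ℕ) := Fin n → ZMod 2

/-- `2^n × 2^n` complex matrices, indexed by bitstrings. -/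
abbrev QMat (n : ℕ) := Matrix (QIdx n) (QIdx n) ℂ

/-- Single-qubit Pauli `X = [[0,1],[1,0]]`. -/
def pauliX : Matrix (ZMod 2) (ZMod 2) ℂ :=
  Matrix.of fun a b => if a = b then 0 else 1

/-- Single-qubit Pauli `Y = [[0,-i],[i,0]]`. -/
def pauliY : Matrix (ZMod 2) (ZMod 2) ℂ :=
  Matrix.of fun a b => if a = b then 0 else if a = 0 then -Complex.I else Complex.I

/-- Single-qubit Pauli `Z = [[1,0],[0,-1]]`. -/
def pauliZ : Matrix (ZMod 2) (ZMod 2) ℂ :=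
  Matrix.of fun a b => if a = b then (if a = 0 then 1 else -1) else 0

/-- The `n`-qubit Pauli group: all `ω P₁⊗⋯⊗Pₙ` with `ω ∈ {±1, ±i}` and
each `Pⱼ ∈ {I, X, Y, Z}` (the Kronecker product is written entrywise). -/
def PauliGroup (n : ℕ) : Set (QMat n) :=
  { M | ∃ (ω : ℂ) (P : Fin n → Matrix (ZMod 2) (ZMod 2) ℂ),
      (ω = 1 ∨ ω = -1 ∨ ω = Complex.I ∨ ω = -Complex.I) ∧
      (∀ j, P j = 1 ∨ P j = pauliX ∨ P j = pauliY ∨ P j = pauliZ) ∧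
      M = ω • Matrix.of (fun a b => ∏ j, P j (a j) (b j)) }

/-- Auxiliary (0-based) Clifford hierarchy: level `0` is the Pauli group, and
level `k+1` consists of the unitaries conjugating Paulis into level `k`. -/
def CHaux (n : ℕ) : ℕ → Set (QMat n)
  | 0 => PauliGroup n
  | k + 1 => { U | U ∈ Matrix.unitaryGroup (QIdx n) ℂ ∧
      ∀ P ∈ PauliGroup n, U * P * Uᴴ ∈ CHaux n k }

/-- `CLevel n k` is the `k`-th level `𝒞ₖ⁽ⁿ⁾` of the `n`-qubit Clifford hierarchy
(meaningful for `k ≥ 1`): `CLevel n 1` is the Pauli group and `CLevel n 2` is the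
Clifford group. -/
def CLevel (n k : ℕ) : Set (QMat n) := CHaux n (k - 1)

/-- `M` lies in the `n`-qubit Pauli group up to a global phase. -/
def IsPauliUpToPhase (n : ℕ) (M : QMat n) : Prop :=
  ∃ (c : ℂ) (P : QMat n), ‖c‖ = 1 ∧ P ∈ PauliGroup n ∧ M = c • P

/-- `U` has Pauli periodicity `m`: `U^(2^m)` is Pauli up to phase while no
`U^(2^t)` with `t < m` is. -/
def HasPauliPeriodicity (n m : ℕ) (U : QMat n) : Prop :=
  IsPauliUpToPhase n (U ^ (2 ^ m)) ∧ ∀ t, t < m → ¬ IsPauliUpToPhase n (U ^ (2 ^ t))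

/-- The controlled gate `CU` on `n+1` qubits (qubit `0` is the control):
the block-diagonal matrix with blocks `I` and `U`. -/
def controlled {n : ℕ} (U : QMat n) : QMat (n + 1) :=
  Matrix.of fun a b =>
    if a 0 = b 0 then
      (if a 0 = 0 then (if Fin.tail a = Fin.tail b then (1 : ℂ) else 0)
       else U (Fin.tail a) (Fin.tail b))
    else 0


namespace CtrlAux

lemma zmod2_cases : ∀ x : ZMod 2, x = 0 ∨ x = 1 := by decide

lemma sum_zmod2 (f : ZMod 2 → ℂ) : ∑ c, f c = f 0 + f 1 := by
  have h : (Finset.univ : Finset (ZMod 2)) = {0, 1} := by decide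
  rw [h, Finset.sum_insert (by decide), Finset.sum_singleton]

def E (n : ℕ) : QIdx (n+1) ≃ (QIdx n ⊕ QIdx n) where
  toFun a := if a 0 = 0 then Sum.inl (Fin.tail a) else Sum.inr (Fin.tail a)
  invFun x := x.elim (Fin.cons 0) (Fin.cons 1)
  left_inv a := by
    dsimp only
    rcases zmod2_cases (a 0) with h | h
    · rw [if_pos h, Sum.elim_inl, ← h]
      exact Fin.cons_self_tail a
    · rw [if_neg (by rw [h]; exact one_ne_zero), Sum.elim_inr, ← h]
      exact Fin.cons_self_tail a
  right_inv x := by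
    rcases x with a | a <;> dsimp only [Sum.elim_inl, Sum.elim_inr]
    · rw [if_pos (Fin.cons_zero _ _), Fin.tail_cons]
    · rw [if_neg (by rw [Fin.cons_zero]; exact one_ne_zero), Fin.tail_cons]

noncomputable def φ {n : ℕ} (M : QMat (n+1)) : Matrix (QIdx n ⊕ QIdx n) (QIdx n ⊕ QIdx n) ℂ :=
  M.submatrix ⇑(E n).symm ⇑(E n).symm

variable {n : ℕ}

lemma phi_ll (M : QMat (n+1)) (a b : QIdx n) : φ M (.inl a) (.inl b) = M (Fin.cons 0 a) (Fin.cons 0 b) := rfl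
lemma phi_lr (M : QMat (n+1)) (a b : QIdx n) : φ M (.inl a) (.inr b) = M (Fin.cons 0 a) (Fin.cons 1 b) := rfl
lemma phi_rl (M : QMat (n+1)) (a b : QIdx n) : φ M (.inr a) (.inl b) = M (Fin.cons 1 a) (Fin.cons 0 b) := rfl
lemma phi_rr (M : QMat (n+1)) (a b : QIdx n) : φ M (.inr a) (.inr b) = M (Fin.cons 1 a) (Fin.cons 1 b) := rfl

lemma phi_mul (M N : QMat (n+1)) : φ (M * N) = φ M * φ N :=
  (Matrix.submatrix_mul_equiv M N _ ((E n).symm) _).symm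

lemma phi_conjT (M : QMat (n+1)) : φ (Mᴴ) = (φ M)ᴴ :=
  (Matrix.conjTranspose_submatrix M _ _).symm

lemma phi_one : φ (1 : QMat (n+1)) = 1 := Matrix.submatrix_one_equiv (E n).symm

lemma phi_smul (c : ℂ) (M : QMat (n+1)) : φ (c • M) = c • φ M := rfl

lemma E_symm_inl (a : QIdx n) : (E n).symm (Sum.inl a) = Fin.cons 0 a := rfl
lemma E_symm_inr (a : QIdx n) : (E n).symm (Sum.inr a) = Fin.cons 1 a := rfl

/-- prepend a one-qubit factor -/
def consP {n : ℕ} (S : Matrix (ZMod 2) (ZMod 2) ℂ) (Pf : Fin n → Matrix (ZMod 2) (ZMod 2) ℂ) :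
    Fin (n+1) → Matrix (ZMod 2) (ZMod 2) ℂ := Fin.cons S Pf

lemma consP_zero {S : Matrix (ZMod 2) (ZMod 2) ℂ} {Pf : Fin n → Matrix (ZMod 2) (ZMod 2) ℂ} :
    consP S Pf 0 = S := rfl
lemma consP_succ {S : Matrix (ZMod 2) (ZMod 2) ℂ} {Pf : Fin n → Matrix (ZMod 2) (ZMod 2) ℂ}
    (j : Fin n) : consP S Pf j.succ = Pf j := Fin.cons_succ _ _ _

/-- entrywise tensor product of one-qubit matrices -/
noncomputable def gp {m : ℕ} (P : Fin m → Matrix (ZMod 2) (ZMod 2) ℂ) : QMat m :=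
  Matrix.of fun a b => ∏ j, P j (a j) (b j)

lemma gp_one {m : ℕ} : gp (fun _ : Fin m => (1 : Matrix (ZMod 2) (ZMod 2) ℂ)) = 1 := by
  ext a b
  by_cases h : a = b
  · subst h; simp [gp, Matrix.one_apply]
  · obtain ⟨j, hj⟩ : ∃ j, a j ≠ b j := by
      by_contra hc; push_neg at hc; exact h (funext hc)
    rw [gp, Matrix.of_apply, Matrix.one_apply_ne h]
    exact Finset.prod_eq_zero (Finset.mem_univ j) (Matrix.one_apply_ne hj)

lemma base_unitary {S : Matrix (ZMod 2) (ZMod 2) ℂ}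
    (h : S = 1 ∨ S = pauliX ∨ S = pauliY ∨ S = pauliZ) : Sᴴ * S = 1 := by
  rcases h with rfl | rfl | rfl | rfl <;>
  · ext a b
    rw [Matrix.mul_apply, sum_zmod2]
    rcases zmod2_cases a with rfl | rfl <;> rcases zmod2_cases b with rfl | rfl <;>
      simp [pauliX, pauliY, pauliZ, Matrix.conjTranspose_apply, Matrix.one_apply,
        Complex.conj_I]

lemma phase_conj_self {ω : ℂ} (h : ω = 1 ∨ ω = -1 ∨ ω = Complex.I ∨ ω = -Complex.I) :
    star ω * ω = 1 := by
  rcases h with rfl | rfl | rfl | rfl <;> simp [Complex.conj_I]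

lemma phase_abs {ω : ℂ} (h : ω = 1 ∨ ω = -1 ∨ ω = Complex.I ∨ ω = -Complex.I) :
    ‖ω‖ = 1 := by
  rcases h with rfl | rfl | rfl | rfl <;> simp

lemma gp_conjT_mul {m : ℕ} (P : Fin m → Matrix (ZMod 2) (ZMod 2) ℂ)
    (hP : ∀ j, P j = 1 ∨ P j = pauliX ∨ P j = pauliY ∨ P j = pauliZ) :
    (gp P)ᴴ * gp P = 1 := by
  ext a b
  rw [Matrix.mul_apply]
  calc ∑ y, (gp P)ᴴ a y * gp P y b
      = ∑ y : QIdx m, ∏ j, (starRingEnd ℂ) (P j (y j) (a j)) * P j (y j) (b j) := by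
        refine Finset.sum_congr rfl fun y _ => ?_
        rw [Matrix.conjTranspose_apply, gp, Matrix.of_apply, Matrix.of_apply]
        rw [show (star : ℂ → ℂ) = ⇑(starRingEnd ℂ) from rfl, map_prod,
          ← Finset.prod_mul_distrib]
    _ = ∏ j, ∑ c : ZMod 2, (starRingEnd ℂ) (P j c (a j)) * P j c (b j) := by
        rw [Finset.prod_univ_sum, Fintype.piFinset_univ]
    _ = ∏ j, ((P j)ᴴ * (P j)) (a j) (b j) := by
        refine Finset.prod_congr rfl fun j _ => ?_
        rw [Matrix.mul_apply]
        refine Finset.sum_congr rfl fun c _ => ?_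
        rw [Matrix.conjTranspose_apply]; rfl
    _ = ∏ j, (1 : Matrix (ZMod 2) (ZMod 2) ℂ) (a j) (b j) :=
        Finset.prod_congr rfl fun j _ => by rw [base_unitary (hP j)]
    _ = (1 : QMat m) a b := congrFun (congrFun gp_one a) b

lemma pauli_unitary {m : ℕ} {M : QMat m} (h : M ∈ PauliGroup m) :
    M ∈ Matrix.unitaryGroup (QIdx m) ℂ := by
  obtain ⟨ω, P, hω, hP, rfl⟩ := h
  rw [Matrix.mem_unitaryGroup_iff']
  rw [Matrix.star_eq_conjTranspose, Matrix.conjTranspose_smul, smul_mul_assoc,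
    mul_smul_comm, smul_smul]
  rw [show (Matrix.of fun a b => ∏ j, P j (a j) (b j) : QMat m) = gp P from rfl]
  rw [gp_conjT_mul P hP, phase_conj_self hω, one_smul]

lemma phi_pauli (ω : ℂ) (P : Fin (n+1) → Matrix (ZMod 2) (ZMod 2) ℂ) :
    φ (ω • Matrix.of (fun a b => ∏ j, P j (a j) (b j))) =
      fromBlocks ((ω * P 0 0 0) • gp fun j => P j.succ) ((ω * P 0 0 1) • gp fun j => P j.succ)
        ((ω * P 0 1 0) • gp fun j => P j.succ) ((ω * P 0 1 1) • gp fun j => P j.succ) := by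
  ext x y
  rcases x with a | a <;> rcases y with b | b <;>
    simp only [φ, Matrix.submatrix_apply, Matrix.smul_apply, Matrix.of_apply,
      fromBlocks_apply₁₁, fromBlocks_apply₁₂, fromBlocks_apply₂₁, fromBlocks_apply₂₂,
      smul_eq_mul, gp, E_symm_inl, E_symm_inr,
      Fin.prod_univ_succ, Fin.cons_zero, Fin.cons_succ] <;> ring

lemma fb_ext {A B C D A' B' C' D' : QMat n}
    (h : fromBlocks A B C D = fromBlocks A' B' C' D') :
    A = A' ∧ B = B' ∧ C = C' ∧ D = D' := by
  refine ⟨?_, ?_, ?_, ?_⟩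
  · have := congrArg Matrix.toBlocks₁₁ h
    rwa [Matrix.toBlocks_fromBlocks₁₁, Matrix.toBlocks_fromBlocks₁₁] at this
  · have := congrArg Matrix.toBlocks₁₂ h
    rwa [Matrix.toBlocks_fromBlocks₁₂, Matrix.toBlocks_fromBlocks₁₂] at this
  · have := congrArg Matrix.toBlocks₂₁ h
    rwa [Matrix.toBlocks_fromBlocks₂₁, Matrix.toBlocks_fromBlocks₂₁] at this
  · have := congrArg Matrix.toBlocks₂₂ h
    rwa [Matrix.toBlocks_fromBlocks₂₂, Matrix.toBlocks_fromBlocks₂₂] at this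

lemma block_unitary {M : QMat (n+1)} {A B : QMat n}
    (hM : M ∈ Matrix.unitaryGroup (QIdx (n+1)) ℂ) (h : φ M = fromBlocks A 0 0 B) :
    B ∈ Matrix.unitaryGroup (QIdx n) ℂ := by
  have h1 : (φ M)ᴴ * φ M = 1 := by
    rw [← phi_conjT, ← phi_mul, ← Matrix.star_eq_conjTranspose,
      Matrix.mem_unitaryGroup_iff'.mp hM, phi_one]
  rw [h, fromBlocks_conjTranspose, fromBlocks_multiply, ← fromBlocks_one] at h1
  simp only [Matrix.conjTranspose_zero, Matrix.mul_zero, Matrix.zero_mul,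
    add_zero, zero_add] at h1
  have h2 := (fb_ext h1).2.2.2
  rw [Matrix.mem_unitaryGroup_iff', Matrix.star_eq_conjTranspose]
  exact h2

lemma matrix_zero_ne_one {m : ℕ} : (0 : QMat m) ≠ 1 := by
  intro h
  have h2 := congrFun (congrFun h (fun _ => 0)) (fun _ => 0)
  simp [Matrix.one_apply] at h2

lemma tail_pauli_mem {P : Fin (n+1) → Matrix (ZMod 2) (ZMod 2) ℂ}
    (hP : ∀ j, P j = 1 ∨ P j = pauliX ∨ P j = pauliY ∨ P j = pauliZ) :
    (gp fun j : Fin n => P j.succ) ∈ PauliGroup n :=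
  ⟨1, fun j => P j.succ, Or.inl rfl, fun j => hP j.succ, (one_smul ℂ _).symm⟩

/-- X on the control qubit tensored with identity, as an (n+1)-qubit Pauli. -/
noncomputable def XI (n : ℕ) : QMat (n+1) :=
  (1 : ℂ) • Matrix.of (fun a b =>
    ∏ j, consP pauliX (fun _ => 1) j (a j) (b j))

lemma XI_mem : XI n ∈ PauliGroup (n+1) :=
  ⟨1, consP pauliX (fun _ => 1), Or.inl rfl,
    fun j => Fin.cases (Or.inr (Or.inl rfl)) (fun _ => Or.inl rfl) j, rfl⟩

lemma phi_XI : φ (XI n) = fromBlocks 0 1 1 0 := by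
  rw [XI, phi_pauli]
  have ht : (fun j : Fin n => consP pauliX (fun _ => (1 : Matrix (ZMod 2) (ZMod 2) ℂ)) j.succ)
      = fun _ : Fin n => (1 : Matrix (ZMod 2) (ZMod 2) ℂ) := funext fun j => consP_succ j
  rw [ht, gp_one, consP_zero]
  have h00 : pauliX (0:ZMod 2) 0 = 0 := by simp [pauliX]
  have h01 : pauliX (0:ZMod 2) 1 = 1 := by
    rw [pauliX, Matrix.of_apply, if_neg (by decide)]
  have h10 : pauliX (1:ZMod 2) 0 = 1 := by
    rw [pauliX, Matrix.of_apply, if_neg (by decide)]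
  have h11 : pauliX (1:ZMod 2) 1 = 0 := by simp [pauliX]
  rw [h00, h01, h10, h11]
  simp

lemma phi_controlled (U : QMat n) : φ (controlled U) = fromBlocks 1 0 0 U := by
  ext x y
  rcases x with a | a <;> rcases y with b | b <;>
    simp [phi_ll, phi_lr, phi_rl, phi_rr, controlled, Fin.cons_zero, Fin.tail_cons,
      fromBlocks_apply₁₁, fromBlocks_apply₁₂, fromBlocks_apply₂₁, fromBlocks_apply₂₂,
      Matrix.one_apply, show (0:ZMod 2) ≠ 1 by decide, show (1:ZMod 2) ≠ 0 by decide]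

lemma phi_lift (ω : ℂ) (Pf : Fin n → Matrix (ZMod 2) (ZMod 2) ℂ) :
    φ (ω • Matrix.of (fun a b => ∏ j, consP 1 Pf j (a j) (b j))) =
      fromBlocks (ω • gp Pf) 0 0 (ω • gp Pf) := by
  rw [phi_pauli]
  have ht : (fun j : Fin n => consP (1 : Matrix (ZMod 2) (ZMod 2) ℂ) Pf j.succ) = Pf :=
    funext fun j => consP_succ j
  rw [ht, consP_zero]
  rw [Matrix.one_apply_eq, Matrix.one_apply_eq,
    Matrix.one_apply_ne (show (0:ZMod 2) ≠ 1 by decide),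
    Matrix.one_apply_ne (show (1:ZMod 2) ≠ 0 by decide)]
  simp

lemma restrict : ∀ (t : ℕ) (M : QMat (n+1)) (A B : QMat n),
    M ∈ Matrix.unitaryGroup (QIdx (n+1)) ℂ → M ∈ CHaux (n+1) t →
    φ M = fromBlocks A 0 0 B → B ∈ CHaux n t := by
  intro t
  induction t with
  | zero =>
    intro M A B hMu hM hblock
    have hBu := block_unitary hMu hblock
    obtain ⟨ω, P, hω, hP, rfl⟩ := hM
    rw [phi_pauli] at hblock
    have hB := (fb_ext hblock).2.2.2
    have hBne : B ≠ 0 := by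
      intro h0
      have h1 := Matrix.mem_unitaryGroup_iff'.mp hBu
      rw [h0] at h1
      simp at h1
    rcases hP 0 with h0 | h0 | h0 | h0
    · refine ⟨ω, fun j => P j.succ, hω, fun j => hP j.succ, ?_⟩
      rw [← hB, h0, Matrix.one_apply_eq, mul_one]
      rfl
    · exfalso
      apply hBne
      rw [← hB, h0, show pauliX (1:ZMod 2) 1 = 0 by simp [pauliX], mul_zero, zero_smul]
    · exfalso
      apply hBne
      rw [← hB, h0, show pauliY (1:ZMod 2) 1 = 0 by simp [pauliY], mul_zero, zero_smul]
    · have hz : pauliZ (1:ZMod 2) 1 = -1 := by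
        rw [pauliZ, Matrix.of_apply, if_pos rfl, if_neg (by decide)]
      refine ⟨-ω, fun j => P j.succ, ?_, fun j => hP j.succ, ?_⟩
      · rcases hω with rfl | rfl | rfl | rfl
        · exact Or.inr (Or.inl (by norm_num))
        · exact Or.inl (by norm_num)
        · exact Or.inr (Or.inr (Or.inr rfl))
        · exact Or.inr (Or.inr (Or.inl (by norm_num)))
      · rw [← hB, h0, hz, show ω * -1 = -ω by ring]
        rfl
  | succ t ih =>
    intro M A B hMu hM hblock
    obtain ⟨hMu', hconj⟩ := hM
    refine ⟨block_unitary hMu hblock, ?_⟩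
    intro Q hQ
    obtain ⟨ω, Pf, hω, hPf, rfl⟩ := hQ
    have hlift_mem : (ω • Matrix.of (fun a b => ∏ j, consP 1 Pf j (a j) (b j))) ∈ PauliGroup (n+1) :=
      ⟨ω, consP 1 Pf, hω, fun j => Fin.cases (Or.inl rfl) (fun i => hPf i) j, rfl⟩
    set L : QMat (n+1) := ω • Matrix.of (fun a b => ∏ j, consP 1 Pf j (a j) (b j)) with hL
    have hN : M * L * Mᴴ ∈ CHaux (n+1) t := hconj _ hlift_mem
    have hNu : M * L * Mᴴ ∈ Matrix.unitaryGroup (QIdx (n+1)) ℂ := by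
      refine mul_mem (mul_mem hMu (pauli_unitary hlift_mem)) ?_
      rw [← Matrix.star_eq_conjTranspose]
      exact Unitary.star_mem hMu
    have hQ0 : (ω • Matrix.of (fun a b => ∏ j, Pf j (a j) (b j)) : QMat n) = ω • gp Pf := rfl
    have hφN : φ (M * L * Mᴴ) =
        fromBlocks (A * (ω • gp Pf) * Aᴴ) 0 0 (B * (ω • gp Pf) * Bᴴ) := by
      rw [phi_mul, phi_mul, phi_conjT, hblock, hL, phi_lift,
        fromBlocks_conjTranspose, fromBlocks_multiply, fromBlocks_multiply]
      simp
    have := ih _ _ _ hNu hN hφN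
    rw [hQ0]
    exact this

lemma descend : ∀ (t : ℕ) (M : QMat (n+1)) (A : QMat n),
    M ∈ CHaux (n+1) t → φ M = fromBlocks 0 Aᴴ A 0 →
    ∃ M', M' ∈ PauliGroup (n+1) ∧ φ M' = fromBlocks 0 ((A ^ 2 ^ t)ᴴ) (A ^ 2 ^ t) 0 := by
  intro t
  induction t with
  | zero =>
    intro M A hM hb
    exact ⟨M, hM, by simpa using hb⟩
  | succ t ih =>
    intro M A hM hb
    obtain ⟨hMu, hconj⟩ := hM
    have hN := hconj _ XI_mem
    have hφN : φ (M * XI n * Mᴴ) = fromBlocks 0 ((A^2)ᴴ) (A^2) 0 := by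
      rw [phi_mul, phi_mul, phi_conjT, hb, phi_XI, fromBlocks_conjTranspose,
        fromBlocks_multiply, fromBlocks_multiply]
      simp [pow_two, Matrix.conjTranspose_mul]
    obtain ⟨M', hM', hφ'⟩ := ih _ _ hN hφN
    refine ⟨M', hM', ?_⟩
    rw [hφ']
    have h2 : (2:ℕ) ^ (t+1) = 2 * 2 ^ t := by ring
    rw [h2, pow_mul]

lemma pauli_block_rl {M : QMat (n+1)} {B : QMat n} (hM : M ∈ PauliGroup (n+1))
    (hB : (φ M).toBlocks₂₁ = B) (hBne : B ≠ 0) : IsPauliUpToPhase n B := by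
  obtain ⟨ω, P, hω, hP, rfl⟩ := hM
  rw [phi_pauli, Matrix.toBlocks_fromBlocks₂₁] at hB
  have hQmem : (gp fun j : Fin n => P j.succ) ∈ PauliGroup n := tail_pauli_mem hP
  rcases hP 0 with h0 | h0 | h0 | h0
  · exfalso
    apply hBne
    rw [← hB, h0, Matrix.one_apply_ne (show (1:ZMod 2) ≠ 0 by decide), mul_zero, zero_smul]
  · refine ⟨ω, gp fun j => P j.succ, phase_abs hω, hQmem, ?_⟩
    rw [← hB, h0, show pauliX (1:ZMod 2) 0 = 1 by
      rw [pauliX, Matrix.of_apply, if_neg (by decide)], mul_one]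
  · refine ⟨ω * Complex.I, gp fun j => P j.succ, ?_, hQmem, ?_⟩
    · rw [norm_mul, phase_abs hω, Complex.norm_I, one_mul]
    · rw [← hB, h0, show pauliY (1:ZMod 2) 0 = Complex.I by
        rw [pauliY, Matrix.of_apply, if_neg (by decide), if_neg (by decide)]]
  · exfalso
    apply hBne
    rw [← hB, h0, show pauliZ (1:ZMod 2) 0 = 0 by simp [pauliZ], mul_zero, zero_smul]

end CtrlAux

open CtrlAux in
/-- if `CU ∈ 𝒞_k^{(n+1)}` (k ≥ 2) then `U^(2^(k-2))` is Pauli up to a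
global phase and `U ∈ 𝒞_k^{(n)}`. -/
theorem controlled_in_hierarchy_necessary (n k : ℕ) (hn : 1 ≤ n) (hk : 2 ≤ k)
    (U : QMat n) (hU : U ∈ Matrix.unitaryGroup (QIdx n) ℂ)
    (hCU : controlled U ∈ CLevel (n + 1) k) :
    IsPauliUpToPhase n (U ^ (2 ^ (k - 2))) ∧ U ∈ CLevel n k := by
  have hk1 : k - 1 = (k - 2) + 1 := by omega
  set m := k - 2 with hm
  rw [CLevel, hk1] at hCU
  obtain ⟨hCUu, hconj⟩ := hCU
  have hφCU : φ (controlled U) = fromBlocks 1 0 0 U := phi_controlled U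
  have hXI := hconj _ XI_mem
  have hφ1 : φ (controlled U * XI n * (controlled U)ᴴ) = fromBlocks 0 Uᴴ U 0 := by
    rw [phi_mul, phi_mul, phi_conjT, hφCU, phi_XI, fromBlocks_conjTranspose,
      fromBlocks_multiply, fromBlocks_multiply]
    simp
  obtain ⟨M', hM', hφ'⟩ := descend m _ U hXI hφ1
  have hUm : U ^ 2 ^ m ∈ Matrix.unitaryGroup (QIdx n) ℂ := pow_mem hU _
  have hBne : (U ^ 2 ^ m) ≠ 0 := by
    intro h0
    have h1 := Matrix.mem_unitaryGroup_iff'.mp hUm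
    rw [h0] at h1
    simp at h1
  constructor
  · exact pauli_block_rl hM' (by rw [hφ', Matrix.toBlocks_fromBlocks₂₁]) hBne
  · rw [CLevel, hk1]
    refine ⟨hU, ?_⟩
    intro P hP
    obtain ⟨ω, Pf, hω, hPf, rfl⟩ := hP
    have hlift_mem : (ω • Matrix.of (fun a b => ∏ j, consP 1 Pf j (a j) (b j))) ∈ PauliGroup (n+1) :=
      ⟨ω, consP 1 Pf, hω, fun j => Fin.cases (Or.inl rfl) (fun i => hPf i) j, rfl⟩
    set L : QMat (n+1) := ω • Matrix.of (fun a b => ∏ j, consP 1 Pf j (a j) (b j)) with hL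
    have hN : controlled U * L * (controlled U)ᴴ ∈ CHaux (n+1) m := hconj _ hlift_mem
    have hNu : controlled U * L * (controlled U)ᴴ ∈ Matrix.unitaryGroup (QIdx (n+1)) ℂ := by
      refine mul_mem (mul_mem hCUu (pauli_unitary hlift_mem)) ?_
      rw [← Matrix.star_eq_conjTranspose]
      exact Unitary.star_mem hCUu
    have hQ0 : (ω • Matrix.of (fun a b => ∏ j, Pf j (a j) (b j)) : QMat n) = ω • gp Pf := rfl
    have hφN : φ (controlled U * L * (controlled U)ᴴ) =
        fromBlocks (ω • gp Pf) 0 0 (U * (ω • gp Pf) * Uᴴ) := by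
      rw [phi_mul, phi_mul, phi_conjT, hφCU, hL, phi_lift,
        fromBlocks_conjTranspose, fromBlocks_multiply, fromBlocks_multiply]
      simp
    have := restrict m _ _ _ hNu hN hφN
    rw [hQ0]
    exact this
end

section
/- Upper bound on Pauli periodicity: Let n ≥ 1 and let U ∈ 𝒞_2^{(n)} be an n-qubit Clifford unitary with Pauli periodicity m (i.e., U^{2^m} ∈ 𝒫_n up to a global phase and no smaller power of the form 2^t has this property). Then m ≤ ⌈log₂(2n)⌉. -/
open Matrix

namespace PPUB

lemma zmod2_cases : ∀ u : ZMod 2, u = 0 ∨ u = 1 := by decide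
lemma zmod2_two : (1 + 1 : ZMod 2) = 0 := by decide

noncomputable def χ (u : ZMod 2) : ℂ := if u = 0 then 1 else -1

lemma χ_zero : χ 0 = 1 := rfl
lemma χ_ne_zero (u : ZMod 2) : χ u ≠ 0 := by
  rcases zmod2_cases u with h | h <;> simp [h, χ]
lemma χ_add (u v : ZMod 2) : χ (u + v) = χ u * χ v := by
  rcases zmod2_cases u with h | h <;> rcases zmod2_cases v with h' | h' <;>
    simp [h, h', χ, zmod2_two]
lemma χ_mul_self (u : ZMod 2) : χ u * χ u = 1 := by
  rcases zmod2_cases u with h | h <;> simp [h, χ]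
lemma χ_inj {u v : ZMod 2} (h : χ u = χ v) : u = v := by
  rcases zmod2_cases u with h1 | h1 <;> rcases zmod2_cases v with h2 | h2 <;>
    subst h1 <;> subst h2 <;> first | rfl | (simp [χ] at h; norm_num at h)

variable {n : ℕ}

def dot (z b : QIdx n) : ZMod 2 := ∑ j, z j * b j

lemma dot_add_left (y z b : QIdx n) : dot (y + z) b = dot y b + dot z b := by
  simp [dot, add_mul, Finset.sum_add_distrib]
lemma dot_add_right (z a b : QIdx n) : dot z (a + b) = dot z a + dot z b := by
  simp [dot, mul_add, Finset.sum_add_distrib]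

lemma qidx_add_self (a : QIdx n) : a + a = 0 := by
  funext j; exact CharTwo.add_self_eq_zero _

lemma qidx_add_cancel {a b x : QIdx n} : a = b + x ↔ b = a + x := by
  constructor <;> rintro rfl <;> rw [add_assoc, qidx_add_self, add_zero]

/-- Weyl operator `X^x Z^z` for `v = (x, z)`. -/
noncomputable def W (v : QIdx n × QIdx n) : QMat n :=
  Matrix.of fun a b => if a = b + v.1 then χ (dot v.2 b) else 0

lemma qidx_add_self' (v : QIdx n × QIdx n) : v + v = 0 := by
  ext <;> simp [qidx_add_self, Prod.fst_add, Prod.snd_add] <;> exact congrFun (qidx_add_self _) _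

lemma W_zero : W (0 : QIdx n × QIdx n) = 1 := by
  ext a b
  simp [W, one_apply, eq_comm, χ_zero, dot]

lemma W_mul (v w : QIdx n × QIdx n) :
    W v * W w = χ (dot v.2 w.1) • W (v + w) := by
  ext a c
  simp only [mul_apply, W, of_apply, Matrix.smul_apply, smul_eq_mul, Prod.fst_add, Prod.snd_add]
  rw [Finset.sum_eq_single (c + w.1)]
  · have he : (c + w.1) + v.1 = c + (v.1 + w.1) := by ring
    rw [if_pos rfl, he]
    by_cases h : a = c + (v.1 + w.1)
    · rw [if_pos h, if_pos h, dot_add_right, dot_add_left, χ_add, χ_add]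
      ring
    · rw [if_neg h, if_neg h, zero_mul, mul_zero]
  · intro b _ hb
    rw [if_neg hb, mul_zero]
  · intro h; exact absurd (Finset.mem_univ _) h


lemma W_conjTranspose (v : QIdx n × QIdx n) :
    (W v)ᴴ = χ (dot v.2 v.1) • W v := by
  ext a b
  have hstar : ∀ u : ZMod 2, star (χ u) = χ u := by
    intro u; rcases zmod2_cases u with h | h <;> simp [h, χ]
  simp only [conjTranspose_apply, W, of_apply, Matrix.smul_apply, smul_eq_mul]
  by_cases h : a = b + v.1
  · have h' : b = a + v.1 := qidx_add_cancel.mp h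
    rw [if_pos h', if_pos h, hstar, h, dot_add_right, χ_add]
    ring
  · have h' : ¬ b = a + v.1 := fun hb => h (qidx_add_cancel.mpr hb)
    rw [if_neg h', if_neg h, mul_zero, star_zero]

lemma W_mul_self (v : QIdx n × QIdx n) :
    W v * W v = χ (dot v.2 v.1) • (1 : QMat n) := by
  rw [W_mul, qidx_add_self' v, W_zero]

lemma W_mul_conjTranspose_self (v : QIdx n × QIdx n) :
    W v * (W v)ᴴ = 1 := by
  rw [W_conjTranspose, Matrix.mul_smul, W_mul_self, smul_smul, χ_mul_self, one_smul]

lemma W_conjTranspose_mul_self (v : QIdx n × QIdx n) :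
    (W v)ᴴ * W v = 1 := by
  rw [W_conjTranspose, Matrix.smul_mul, W_mul_self, smul_smul, χ_mul_self, one_smul]

lemma W_comm (v w : QIdx n × QIdx n) :
    W v * W w = χ (dot v.2 w.1 + dot w.2 v.1) • (W w * W v) := by
  rw [W_mul, W_mul, smul_smul, χ_add, add_comm w v]
  congr 1
  rw [mul_assoc, χ_mul_self, mul_one]

/-- conjugation of a Weyl operator by a Weyl operator. -/
lemma W_conj_W (u v : QIdx n × QIdx n) :
    W u * W v * (W u)ᴴ = χ (dot u.2 v.1 + dot v.2 u.1) • W v := by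
  rw [W_comm u v, Matrix.smul_mul, Matrix.mul_assoc, W_mul_conjTranspose_self, Matrix.mul_one]

lemma W_apply_shift (v : QIdx n × QIdx n) (b : QIdx n) :
    W v (b + v.1) b = χ (dot v.2 b) := by
  simp [W]

lemma dot_single (z : QIdx n) (j : Fin n) : dot z (Pi.single j 1) = z j := by
  simp [dot, Pi.single_apply]

/-- Uniqueness: distinct Weyl operators are not proportional. -/
lemma W_uniq {c d : ℂ} {v w : QIdx n × QIdx n} (hc : c ≠ 0)
    (h : c • W v = d • W w) : c = d ∧ v = w := by
  have h1 : ∀ a b, c • W v a b = d • W w a b := by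
    intro a b; rw [← Matrix.smul_apply, ← Matrix.smul_apply, h]
  have hx : v.1 = w.1 := by
    by_contra hne
    have := h1 (0 + v.1) 0
    rw [smul_eq_mul, smul_eq_mul, W_apply_shift] at this
    have h2 : W w (0 + v.1) (0 : QIdx n) = 0 := by
      simp [W, hne]
    rw [h2, mul_zero] at this
    exact hc (by
      have := mul_eq_zero.mp this
      rcases this with h | h
      · exact h
      · exact absurd h (χ_ne_zero _))
  have hcases : ∀ b : QIdx n, c * χ (dot v.2 b) = d * χ (dot w.2 b) := by
    intro b
    have := h1 (b + v.1) b
    rw [smul_eq_mul, smul_eq_mul, W_apply_shift] at this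
    rw [this]
    congr 1
    simp [W, hx]
  have hcd : c = d := by
    have := hcases 0
    simpa [dot, χ_zero] using this
  subst hcd
  refine ⟨rfl, ?_⟩
  have hz : v.2 = w.2 := by
    funext j
    exact χ_inj (mul_left_cancel₀ hc
      (by simpa [dot_single] using hcases (Pi.single j 1)))
  exact Prod.ext hx hz


lemma dot_single_left (b : QIdx n) (j : Fin n) : dot (Pi.single j 1) b = b j := by
  simp [dot, Pi.single_apply]

lemma mul_W_apply (M : QMat n) (v : QIdx n × QIdx n) (a b : QIdx n) :
    (M * W v) a b = M a (b + v.1) * χ (dot v.2 b) := by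
  rw [mul_apply, Finset.sum_eq_single (b + v.1)]
  · simp [W]
  · intro c _ hcne
    simp [W, hcne]
  · intro hmem; exact absurd (Finset.mem_univ _) hmem

lemma W_mul_apply (v : QIdx n × QIdx n) (M : QMat n) (a b : QIdx n) :
    (W v * M) a b = χ (dot v.2 (a + v.1)) * M (a + v.1) b := by
  rw [mul_apply, Finset.sum_eq_single (a + v.1)]
  · have : a = (a + v.1) + v.1 := qidx_add_cancel.mp rfl
    simp [W, ← this]
  · intro c _ hcne
    have : ¬ a = c + v.1 := fun hh => hcne (qidx_add_cancel.mp hh).symm.symm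
    -- note: (qidx_add_cancel.mp hh) : c = a + v.1
    simp [W, this]
  · intro hmem; exact absurd (Finset.mem_univ _) hmem

/-- A matrix commuting with all Weyl operators is a scalar. -/
lemma commutant_scalar {M : QMat n} (h : ∀ v, M * W v = W v * M) :
    ∃ c : ℂ, M = c • (1 : QMat n) := by
  have hoff : ∀ a b : QIdx n, a ≠ b → M a b = 0 := by
    intro a b hab
    obtain ⟨j, hj⟩ : ∃ j, a j ≠ b j := by
      by_contra hcon
      push_neg at hcon
      exact hab (funext hcon)
    have := congrFun (congrFun (h (0, Pi.single j 1)) a) b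
    rw [mul_W_apply, W_mul_apply] at this
    simp only [add_zero] at this
    rw [dot_single_left, dot_single_left] at this
    by_contra hM
    have h2 : χ (b j) * M a b = χ (a j) * M a b := by
      rw [mul_comm, this, mul_comm]
    exact hj (χ_inj (mul_right_cancel₀ hM h2).symm)
  have hdiag : ∀ a b : QIdx n, M a a = M b b := by
    intro a b
    have := congrFun (congrFun (h (a + b, 0)) a) b
    rw [mul_W_apply, W_mul_apply] at this
    have h1 : b + (a + b) = a := by
      rw [show b + (a + b) = a + (b + b) by ring, qidx_add_self, add_zero]
    have h2 : a + (a + b) = b := by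
      rw [show a + (a + b) = b + (a + a) by ring, qidx_add_self, add_zero]
    simp only [h1, h2] at this
    have hdz : dot (a + b, (0:QIdx n)).2 b = 0 := by simp [dot]
    have hdz2 : dot (a + b, (0:QIdx n)).2 b = 0 := hdz
    simpa [dot, χ_zero] using this
  refine ⟨M 0 0, ?_⟩
  ext a b
  by_cases hab : a = b
  · subst hab; rw [hdiag a 0]; simp [one_apply]
  · rw [hoff a b hab]; simp [one_apply, hab]


/-- single-qubit Weyl factor `X^x Z^z`. -/
noncomputable def Wfac (x z : ZMod 2) : Matrix (ZMod 2) (ZMod 2) ℂ :=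
  Matrix.of fun a b => if a = b + x then χ (z * b) else 0

lemma χ_prod {ι : Type*} (s : Finset ι) (f : ι → ZMod 2) :
    ∏ j ∈ s, χ (f j) = χ (∑ j ∈ s, f j) := by
  induction s using Finset.cons_induction with
  | empty => simp [χ_zero]
  | cons j s hj ih => rw [Finset.prod_cons, Finset.sum_cons, χ_add, ih]

lemma W_apply_eq_prod (v : QIdx n × QIdx n) (a b : QIdx n) :
    W v a b = ∏ j, Wfac (v.1 j) (v.2 j) (a j) (b j) := by
  by_cases h : a = b + v.1
  · have hj : ∀ j, a j = b j + v.1 j := fun j => congrFun h j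
    simp only [W, of_apply, if_pos h, Wfac]
    rw [show (∏ j, ((if a j = b j + v.1 j then χ (v.2 j * b j) else 0)))
        = ∏ j, χ (v.2 j * b j) from Finset.prod_congr rfl (fun j _ => if_pos (hj j)), χ_prod]
    rfl
  · obtain ⟨j, hjne⟩ : ∃ j, a j ≠ b j + v.1 j := by
      by_contra hcon; push_neg at hcon; exact h (funext hcon)
    simp only [W, of_apply, if_neg h, Wfac]
    rw [eq_comm]
    apply Finset.prod_eq_zero (Finset.mem_univ j)
    simp [hjne]

lemma Wfac00 : Wfac 0 0 = 1 := by
  ext a b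
  rcases zmod2_cases a with h | h <;> rcases zmod2_cases b with h' | h' <;>
    simp [h, h', Wfac, χ, Matrix.one_apply, zmod2_two]
lemma Wfac10 : Wfac 1 0 = pauliX := by
  ext a b
  rcases zmod2_cases a with h | h <;> rcases zmod2_cases b with h' | h' <;>
    simp [h, h', Wfac, χ, pauliX, zmod2_two] <;> decide
lemma Wfac01 : Wfac 0 1 = pauliZ := by
  ext a b
  rcases zmod2_cases a with h | h <;> rcases zmod2_cases b with h' | h' <;>
    simp [h, h', Wfac, χ, pauliZ, zmod2_two]
lemma Wfac11 : Wfac 1 1 = (-Complex.I) • pauliY := by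
  ext a b
  rcases zmod2_cases a with h | h <;> rcases zmod2_cases b with h' | h' <;>
    simp [h, h', Wfac, χ, pauliY, zmod2_two] <;> norm_num <;> decide

/-- every Weyl operator is in the Pauli group. -/
lemma W_mem_pauli (v : QIdx n × QIdx n) : W v ∈ PauliGroup n := by
  classical
  refine ⟨∏ j, (if v.1 j = 1 ∧ v.2 j = 1 then -Complex.I else 1),
    fun j => if v.1 j = 1 ∧ v.2 j = 1 then pauliY else Wfac (v.1 j) (v.2 j), ?_, ?_, ?_⟩
  · apply Finset.prod_induction _ (fun ω => ω = 1 ∨ ω = -1 ∨ ω = Complex.I ∨ ω = -Complex.I)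
    · rintro x y (rfl|rfl|rfl|rfl) (rfl|rfl|rfl|rfl) <;>
        norm_num [Complex.I_mul_I]
    · left; rfl
    · intro j _
      by_cases h : v.1 j = 1 ∧ v.2 j = 1 <;> simp [h]
  · intro j
    simp only
    by_cases h : v.1 j = 1 ∧ v.2 j = 1
    · rw [if_pos h]; right; right; left; rfl
    · rw [if_neg h]
      rcases zmod2_cases (v.1 j) with h1 | h1 <;> rcases zmod2_cases (v.2 j) with h2 | h2
      · left; rw [h1, h2, Wfac00]
      · right; right; right; rw [h1, h2, Wfac01]
      · right; left; rw [h1, h2, Wfac10]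
      · exact absurd ⟨h1, h2⟩ h
  · ext a b
    rw [W_apply_eq_prod]
    simp only [Matrix.smul_apply, of_apply, smul_eq_mul, ← Finset.prod_mul_distrib]
    apply Finset.prod_congr rfl
    intro j _
    by_cases h : v.1 j = 1 ∧ v.2 j = 1
    · rw [if_pos h, if_pos h, h.1, h.2, Wfac11]; simp
    · rw [if_neg h, if_neg h, one_mul]

/-- every Pauli group element is a nonzero multiple of a Weyl operator. -/
lemma pauli_eq_smul_W {M : QMat n} (hM : M ∈ PauliGroup n) :
    ∃ (c : ℂ) (v : QIdx n × QIdx n), c ≠ 0 ∧ M = c • W v := by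
  classical
  obtain ⟨ω, P, hω, hP, hM⟩ := hM
  have key : ∀ j, ∃ dxz : ℂ × ZMod 2 × ZMod 2,
      dxz.1 ≠ 0 ∧ P j = dxz.1 • Wfac dxz.2.1 dxz.2.2 := by
    intro j
    rcases hP j with h | h | h | h
    · exact ⟨(1, 0, 0), one_ne_zero, by rw [h, Wfac00, one_smul]⟩
    · exact ⟨(1, 1, 0), one_ne_zero, by rw [h, Wfac10, one_smul]⟩
    · refine ⟨(Complex.I, 1, 1), Complex.I_ne_zero, ?_⟩
      rw [h, Wfac11, smul_smul]
      norm_num [Complex.I_mul_I]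
    · exact ⟨(1, 0, 1), one_ne_zero, by rw [h, Wfac01, one_smul]⟩
  choose f hf using key
  have hωne : ω ≠ 0 := by
    rcases hω with rfl | rfl | rfl | rfl <;> simp [Complex.I_ne_zero]
  refine ⟨ω * ∏ j, (f j).1, (fun j => (f j).2.1, fun j => (f j).2.2),
    mul_ne_zero hωne (Finset.prod_ne_zero_iff.mpr fun j _ => (hf j).1), ?_⟩
  rw [hM]
  ext a b
  simp only [Matrix.smul_apply, of_apply, smul_eq_mul]
  rw [W_apply_eq_prod]
  simp only
  rw [show (∏ j, Wfac ((f j).2.1) ((f j).2.2) (a j) (b j))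
      = ∏ j, ((f j).1⁻¹ * P j (a j) (b j)) from Finset.prod_congr rfl (fun j _ => by
        rw [(hf j).2]; simp only [Matrix.smul_apply, smul_eq_mul]
        rw [← mul_assoc, inv_mul_cancel₀ (hf j).1, one_mul]),
    Finset.prod_mul_distrib, Finset.prod_inv_distrib]
  have hp : (∏ j, (f j).1) ≠ 0 := Finset.prod_ne_zero_iff.mpr fun j _ => (hf j).1
  field_simp


lemma unitary_conj_mul {U P Q : QMat n} (hU : Uᴴ * U = 1) :
    (U * P * Uᴴ) * (U * Q * Uᴴ) = U * (P * Q) * Uᴴ := by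
  calc (U * P * Uᴴ) * (U * Q * Uᴴ) = U * P * (Uᴴ * U) * Q * Uᴴ := by
        simp only [Matrix.mul_assoc]
      _ = U * (P * Q) * Uᴴ := by rw [hU]; simp only [Matrix.mul_assoc, Matrix.one_mul]

end PPUB

open PPUB

/-- Upper bound on Pauli periodicity: an `n`-qubit Clifford with
Pauli periodicity `m` satisfies `m ≤ ⌈log₂(2n)⌉`. -/
theorem pauli_periodicity_upper_bound (n m : ℕ) (hn : 1 ≤ n)
    (U : QMat n) (hU : U ∈ CLevel n 2) (hper : HasPauliPeriodicity n m U) :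
    m ≤ Nat.clog 2 (2 * n) := by
  classical
  obtain ⟨hUu, hUc⟩ := (show U ∈ CHaux n 1 from hU)
  have hUstar : Uᴴ * U = 1 := by
    have := Matrix.mem_unitaryGroup_iff'.mp hUu
    rwa [Matrix.star_eq_conjTranspose] at this
  have hUk : ∀ k : ℕ, ((U ^ k)ᴴ * U ^ k = 1) ∧ (U ^ k * (U ^ k)ᴴ = 1) := by
    intro k
    have hk : U ^ k ∈ Matrix.unitaryGroup (QIdx n) ℂ := pow_mem hUu k
    constructor
    · have := Matrix.mem_unitaryGroup_iff'.mp hk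
      rwa [Matrix.star_eq_conjTranspose] at this
    · have := Matrix.mem_unitaryGroup_iff.mp hk
      rwa [Matrix.star_eq_conjTranspose] at this
  -- the induced map on Weyl labels
  have hC : ∀ v : QIdx n × QIdx n, ∃ (c : ℂ) (w : QIdx n × QIdx n),
      c ≠ 0 ∧ U * W v * Uᴴ = c • W w := by
    intro v
    obtain ⟨c, w, hc, hw⟩ := pauli_eq_smul_W (hUc (W v) (W_mem_pauli v))
    exact ⟨c, w, hc, hw⟩
  choose φ A hφ hA using hC
  have hA0 : A 0 = 0 := by
    have h1 : φ 0 • W (A 0) = (1 : ℂ) • W (0 : QIdx n × QIdx n) := by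
      rw [← hA 0, W_zero, Matrix.mul_one, one_smul]
      simpa using (hUk 1).2
    exact (W_uniq (hφ 0) h1).2
  have hAadd : ∀ v w, A (v + w) = A v + A w := by
    intro v w
    have key : U * W (v + w) * Uᴴ
        = (χ (dot v.2 w.1) * (φ v * (φ w * χ (dot (A v).2 (A w).1)))) • W (A v + A w) := by
      have h1 : W (v + w) = χ (dot v.2 w.1) • (W v * W w) := by
        rw [W_mul, smul_smul, χ_mul_self, one_smul]
      rw [h1, Matrix.mul_smul, Matrix.smul_mul, ← unitary_conj_mul hUstar,
        hA v, hA w, Matrix.smul_mul, Matrix.mul_smul, W_mul, smul_smul, smul_smul, smul_smul,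
        mul_assoc, mul_assoc]
    have h2 := (hA (v + w)).symm.trans key
    have := W_uniq (hφ (v + w)) h2
    exact this.2
  -- package as a linear endomorphism
  let f : Module.End (ZMod 2) (QIdx n × QIdx n) :=
    { toFun := A
      map_add' := hAadd
      map_smul' := by
        intro c v
        rcases zmod2_cases c with rfl | rfl
        · simp [hA0]
        · simp }
  have hf : ∀ v, f v = A v := fun _ => rfl
  -- iterated conjugation
  have hIter : ∀ (k : ℕ) (v : QIdx n × QIdx n), ∃ c : ℂ, c ≠ 0 ∧
      U ^ k * W v * (U ^ k)ᴴ = c • W ((f ^ k) v) := by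
    intro k
    induction k with
    | zero => intro v; exact ⟨1, one_ne_zero, by simp⟩
    | succ k ih =>
      intro v
      obtain ⟨c, hc, hck⟩ := ih v
      refine ⟨c * φ ((f ^ k) v), mul_ne_zero hc (hφ _), ?_⟩
      have h1 : U ^ (k+1) * W v * (U ^ (k+1))ᴴ
          = U * (U ^ k * W v * (U ^ k)ᴴ) * Uᴴ := by
        rw [pow_succ' U k, Matrix.conjTranspose_mul]
        simp only [Matrix.mul_assoc]
      rw [h1, hck, Matrix.mul_smul, Matrix.smul_mul, hA, smul_smul]
      congr 2
      rw [pow_succ' f k]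
      rfl
  -- `f ^ (2 ^ m) = 1`
  have hfm : f ^ (2 ^ m) = 1 := by
    obtain ⟨c, P, habs, hP, hU2m⟩ := hper.1
    obtain ⟨d, u, hd, hPd⟩ := pauli_eq_smul_W hP
    have hcne : c ≠ 0 := by
      intro h; rw [h] at habs; simp at habs
    have hkey : ∀ v, U ^ (2 ^ m) * W v * (U ^ (2 ^ m))ᴴ
        = ((c * d) * star (c * d) * χ (dot u.2 v.1 + dot v.2 u.1)) • W v := by
      intro v
      rw [hU2m, hPd, smul_smul, Matrix.conjTranspose_smul,
        Matrix.smul_mul, Matrix.smul_mul, Matrix.mul_smul, smul_smul, W_conj_W, smul_smul]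
      try congr 1
      try ring
    apply LinearMap.ext
    intro v
    obtain ⟨e, he, hek⟩ := hIter (2 ^ m) v
    have := W_uniq he (hek.symm.trans (hkey v))
    simpa using this.2
  -- the endomorphism ring has characteristic 2
  haveI : Fact (Nat.Prime 2) := ⟨Nat.prime_two⟩
  haveI hchar : CharP (Module.End (ZMod 2) (QIdx n × QIdx n)) 2 := by
    apply Module.charP_end
    refine ⟨(Pi.single ⟨0, hn⟩ 1, 0), ?_⟩
    rw [Submodule.eq_bot_iff]
    intro r hr
    rw [Ideal.mem_torsionOf_iff] at hr
    have := congrFun (congrArg Prod.fst hr) ⟨0, hn⟩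
    simpa using this
  set g : Module.End (ZMod 2) (QIdx n × QIdx n) := f - 1 with hg
  have hfg : f = g + 1 := by rw [hg]; abel
  have hg2m : g ^ (2 ^ m) = 0 := by
    have hb := add_pow_char_pow_of_commute 2 m (Commute.one_right g)
    rw [← hfg, hfm, one_pow] at hb
    have h0 : g ^ (2 ^ m) + 1 = 0 + 1 := by rw [zero_add]; exact hb.symm
    exact add_right_cancel h0
  have hfin : g ^ (Module.finrank (ZMod 2) (QIdx n × QIdx n)) = 0 := by
    have hcp := IsNilpotent.charpoly_eq_X_pow_finrank ⟨2 ^ m, hg2m⟩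
    have haev := LinearMap.aeval_self_charpoly g
    rw [hcp, map_pow, Polynomial.aeval_X] at haev
    exact haev
  have hrank : Module.finrank (ZMod 2) (QIdx n × QIdx n) = 2 * n := by
    rw [Module.finrank_prod, Module.finrank_pi, Fintype.card_fin]; ring
  rw [hrank] at hfin
  by_contra hcon
  push_neg at hcon
  have hlt : Nat.clog 2 (2 * n) < m := hcon
  set t := Nat.clog 2 (2 * n) with ht
  have hle : 2 * n ≤ 2 ^ t := Nat.le_pow_clog one_lt_two _
  have hgs : g ^ (2 ^ t) = 0 := by
    calc g ^ (2 ^ t) = g ^ (2 * n) * g ^ (2 ^ t - 2 * n) := by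
          rw [← pow_add, Nat.add_sub_cancel' hle]
      _ = 0 := by rw [hfin, zero_mul]
  have hfs : f ^ (2 ^ t) = 1 := by
    rw [hfg, add_pow_char_pow_of_commute 2 t (Commute.one_right g), hgs, one_pow, zero_add]
  -- hence U ^ (2 ^ t) conjugates every Weyl operator to a multiple of itself
  have hfix : ∀ v : QIdx n × QIdx n, (f ^ (2 ^ t)) v = v := by
    intro v; rw [hfs]; rfl
  apply hper.2 t hlt
  -- build the phase function ε
  have hEps : ∀ v, ∃ c : ℂ, c ≠ 0 ∧
      U ^ (2 ^ t) * W v * (U ^ (2 ^ t))ᴴ = c • W v := by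
    intro v
    obtain ⟨c, hc, hck⟩ := hIter (2 ^ t) v
    rw [hfix v] at hck
    exact ⟨c, hc, hck⟩
  choose ε hε hεk using hEps
  have hVstar : (U ^ (2 ^ t))ᴴ * U ^ (2 ^ t) = 1 := (hUk (2 ^ t)).1
  have hVstar' : U ^ (2 ^ t) * (U ^ (2 ^ t))ᴴ = 1 := (hUk (2 ^ t)).2
  have hε0 : ε 0 = 1 := by
    have h1 : ε 0 • W (0 : QIdx n × QIdx n) = (1 : ℂ) • W (0 : QIdx n × QIdx n) := by
      rw [← hεk 0, W_zero, Matrix.mul_one, one_smul]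
      exact hVstar'
    exact (W_uniq (hε 0) h1).1
  have hεadd : ∀ v w, ε (v + w) = ε v * ε w := by
    intro v w
    have h1 : W (v + w) = χ (dot v.2 w.1) • (W v * W w) := by
      rw [W_mul, smul_smul, χ_mul_self, one_smul]
    have key : U ^ (2 ^ t) * W (v + w) * (U ^ (2 ^ t))ᴴ = (ε v * ε w) • W (v + w) := by
      rw [h1, Matrix.mul_smul, Matrix.smul_mul, ← unitary_conj_mul hVstar, hεk v, hεk w,
        Matrix.smul_mul, Matrix.mul_smul, smul_smul, W_mul, smul_smul, smul_smul]
      simp only [smul_smul]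
      congr 1
      ring
    exact (W_uniq (hε (v + w)) ((hεk (v + w)).symm.trans key)).1
  have hεpm : ∀ v, ε v = 1 ∨ ε v = -1 := by
    intro v
    have h2 : ε v * ε v = 1 := by rw [← hεadd v v, qidx_add_self' v, hε0]
    exact mul_self_eq_one_iff.mp h2
  set L : QIdx n × QIdx n → ZMod 2 := fun v => if ε v = 1 then 0 else 1 with hLdef
  have hεχ : ∀ v, ε v = χ (L v) := by
    intro v
    rcases hεpm v with h | h
    · simp [hLdef, h, χ]
    · rw [hLdef]
      simp only [h, χ]
      norm_num
  have hLadd : ∀ v w, L (v + w) = L v + L w := by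
    intro v w
    apply χ_inj
    rw [← hεχ, hεadd, hεχ v, hεχ w, ← χ_add]
  have hL0 : L 0 = 0 := by simp [hLdef, hε0]
  set w0 : QIdx n × QIdx n :=
    (fun j => L (0, Pi.single j 1), fun j => L (Pi.single j 1, 0)) with hw0def
  have hLd : ∀ v : QIdx n × QIdx n, L v = dot w0.2 v.1 + dot v.2 w0.1 := by
    intro v
    let Lh : (QIdx n × QIdx n) →+ ZMod 2 := AddMonoidHom.mk' L (fun a b => hLadd a b)
    have hdecomp : v = (∑ j, ((Pi.single j (v.1 j), 0) : QIdx n × QIdx n))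
        + (∑ j, ((0, Pi.single j (v.2 j)) : QIdx n × QIdx n)) := by
      apply Prod.ext
      · simp [Prod.fst_sum, Finset.univ_sum_single]
      · simp [Prod.snd_sum, Finset.univ_sum_single]
    have hLh : ∀ u, Lh u = L u := fun _ => rfl
    calc L v = Lh v := rfl
      _ = ∑ j, L (Pi.single j (v.1 j), 0) + ∑ j, L (0, Pi.single j (v.2 j)) := by
          conv_lhs => rw [show v = _ from hdecomp]
          rw [map_add, map_sum, map_sum]
          rfl
      _ = ∑ j, w0.2 j * v.1 j + ∑ j, v.2 j * w0.1 j := by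
          congr 1
          · apply Finset.sum_congr rfl
            intro j _
            rcases zmod2_cases (v.1 j) with h | h
            · rw [h, mul_zero, Pi.single_zero]
              exact hL0
            · rw [h, mul_one]
          · apply Finset.sum_congr rfl
            intro j _
            rcases zmod2_cases (v.2 j) with h | h
            · rw [h, zero_mul, Pi.single_zero]
              exact hL0
            · rw [h, one_mul]
      _ = dot w0.2 v.1 + dot v.2 w0.1 := rfl
  have hconj : ∀ v, U ^ (2 ^ t) * W v * (U ^ (2 ^ t))ᴴ = W w0 * W v * (W w0)ᴴ := by
    intro v
    rw [hεk v, W_conj_W, hεχ v, hLd v]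
  have hM : ∀ v, ((W w0)ᴴ * U ^ (2 ^ t)) * W v = W v * ((W w0)ᴴ * U ^ (2 ^ t)) := by
    intro v
    have h1 : W w0 * W v * (W w0)ᴴ * U ^ (2 ^ t) = U ^ (2 ^ t) * W v := by
      rw [← hconj v, Matrix.mul_assoc (U ^ (2 ^ t) * W v), hVstar, Matrix.mul_one]
    calc ((W w0)ᴴ * U ^ (2 ^ t)) * W v
        = (W w0)ᴴ * (U ^ (2 ^ t) * W v) := by rw [Matrix.mul_assoc]
      _ = (W w0)ᴴ * (W w0 * W v * (W w0)ᴴ * U ^ (2 ^ t)) := by rw [h1]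
      _ = ((W w0)ᴴ * W w0) * W v * ((W w0)ᴴ * U ^ (2 ^ t)) := by
          simp only [Matrix.mul_assoc]
      _ = W v * ((W w0)ᴴ * U ^ (2 ^ t)) := by
          rw [W_conjTranspose_mul_self, Matrix.one_mul]
  obtain ⟨c0, hc0⟩ := commutant_scalar hM
  have hVQ : U ^ (2 ^ t) = c0 • W w0 := by
    have h2 : W w0 * ((W w0)ᴴ * U ^ (2 ^ t)) = U ^ (2 ^ t) := by
      rw [← Matrix.mul_assoc, W_mul_conjTranspose_self, Matrix.one_mul]
    rw [← h2, hc0, Matrix.mul_smul, Matrix.mul_one]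
  have habs : ‖c0‖ = 1 := by
    have h1 : (star c0 * c0) • (1 : QMat n) = 1 := by
      have h := hVstar
      rw [hVQ, Matrix.conjTranspose_smul, Matrix.smul_mul, Matrix.mul_smul, smul_smul,
        W_conjTranspose_mul_self] at h
      exact h
    have h2 : star c0 * c0 = 1 := by
      have h3 := congrFun (congrFun h1 0) 0
      simpa [Matrix.one_apply] using h3
    have h4 : Complex.normSq c0 = 1 := by
      have h5 : ((Complex.normSq c0 : ℂ)) = 1 := by
        rw [Complex.normSq_eq_conj_mul_self, ← Complex.star_def, h2]
      exact_mod_cast h5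
    have h6 : ‖c0‖ ^ 2 = 1 := by rw [Complex.sq_norm, h4]
    nlinarith [norm_nonneg c0]
  exact ⟨c0, W w0, habs, W_mem_pauli w0, hVQ⟩
end

section
/- Tightness of the Pauli-periodicity bound: For every integer n > 1 there exists an n-qubit Clifford unitary U ∈ 𝒞_2^{(n)} whose Pauli periodicity is exactly ⌈log₂(2n)⌉; that is, U^{2^{⌈log₂(2n)⌉}} lies in 𝒫_n up to a global phase, while U^{2^t} does not lie in 𝒫_n up to a global phase for any 0 ≤ t < ⌈log₂(2n)⌉. -/
open Matrix

noncomputable def χ (t : ZMod 2) : ℂ := if t = 0 then 1 else -1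

lemma zmod2_cases (u : ZMod 2) : u = 0 ∨ u = 1 := by revert u; decide

lemma χ_zero : χ 0 = 1 := rfl
lemma χ_one : χ 1 = -1 := rfl

lemma χ_add (s t : ZMod 2) : χ (s + t) = χ s * χ t := by
  rcases zmod2_cases s with hs | hs <;> rcases zmod2_cases t with ht | ht <;>
    subst hs <;> subst ht <;>
    simp [χ, show ((1:ZMod 2) + 1) = 0 from by decide]

lemma χ_val (u : ZMod 2) : χ u = (-1 : ℂ) ^ u.val := by
  rcases zmod2_cases u with h | h <;> subst h <;>
    simp [χ, show ZMod.val (1 : ZMod 2) = 1 from rfl]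

lemma zmod2_cast_val (u : ZMod 2) : ((u.val : ZMod 2)) = u := by revert u; decide

lemma neg_one_pow_eq_χ (m : ℕ) : ((-1 : ℂ)) ^ m = χ ((m : ZMod 2)) := by
  rcases Nat.even_or_odd m with h | h
  · rw [h.neg_one_pow]
    have h2 : ((m : ZMod 2)) = 0 := by
      rw [ZMod.natCast_eq_zero_iff]; exact h.two_dvd
    rw [h2, χ_zero]
  · rw [h.neg_one_pow]
    obtain ⟨k, hk⟩ := h
    have h2 : ((m : ZMod 2)) = 1 := by
      subst hk; push_cast; rw [show ((2:ZMod 2)) = 0 from by decide]; ring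
    rw [h2, χ_one]

lemma I_pow_four : Complex.I ^ 4 = 1 := by
  rw [show (4:ℕ) = 2*2 from rfl, pow_mul, Complex.I_sq]; norm_num

lemma I_pow_cases (t : ℕ) :
    Complex.I ^ t = 1 ∨ Complex.I ^ t = -1 ∨ Complex.I ^ t = Complex.I ∨
      Complex.I ^ t = -Complex.I := by
  have h : Complex.I ^ t = Complex.I ^ (t % 4) := by
    conv_lhs => rw [← Nat.div_add_mod t 4]
    rw [pow_add, pow_mul, I_pow_four, one_pow, one_mul]
  rw [h]
  have hr : t % 4 < 4 := Nat.mod_lt _ (by norm_num)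
  interval_cases (t % 4)
  · left; rfl
  · right; right; left; exact pow_one _
  · right; left; rw [Complex.I_sq]
  · right; right; right
    rw [pow_succ, Complex.I_sq]; ring

lemma I_pow_two_mul (s : ℕ) : Complex.I ^ (2 * s) = χ ((s : ZMod 2)) := by
  rw [pow_mul, Complex.I_sq, neg_one_pow_eq_χ]

lemma I_pow_ne_zero (t : ℕ) : Complex.I ^ t ≠ 0 :=
  pow_ne_zero _ Complex.I_ne_zero

section PauliNormal

open Finset

variable {n : ℕ}

/-- Normal form for Pauli matrices: `I^k · [x = y+v] · (-1)^{w·y}`. -/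
noncomputable def pform (n : ℕ) (k : ℕ) (v w : QIdx n) : QMat n :=
  Matrix.of fun x y =>
    Complex.I ^ k * ((if x = y + v then (1:ℂ) else 0) * χ (w ⬝ᵥ y))

lemma prod_ite_eq_vec (x y v : QIdx n) :
    (∏ j, (if x j = y j + v j then (1:ℂ) else 0)) =
      if x = y + v then (1:ℂ) else 0 := by
  by_cases h : x = y + v
  · rw [if_pos h]
    apply Finset.prod_eq_one
    intro j _
    rw [if_pos (by rw [h]; rfl)]
  · rw [if_neg h]
    have h2 : ¬ ∀ j, x j = y j + v j := by
      intro hh; exact h (funext fun j => hh j)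
    push_neg at h2
    obtain ⟨j, hj⟩ := h2
    exact Finset.prod_eq_zero (Finset.mem_univ j) (if_neg hj)

lemma prod_χ (f : Fin n → ZMod 2) : (∏ j, χ (f j)) = χ (∑ j, f j) := by
  have h1 : ((∑ j, (f j).val : ℕ) : ZMod 2) = ∑ j, f j := by
    push_cast [zmod2_cast_val]
    rfl
  calc (∏ j, χ (f j)) = ∏ j, ((-1:ℂ)) ^ (f j).val := by simp only [χ_val]
    _ = (-1:ℂ) ^ (∑ j, (f j).val) := Finset.prod_pow_eq_pow_sum _ _ _
    _ = χ (∑ j, f j) := by rw [neg_one_pow_eq_χ, h1]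

/-- the entrywise description of a factor given its `(v,w)` data -/
def facOK (P : Matrix (ZMod 2) (ZMod 2) ℂ) (v w : ZMod 2) : Prop :=
  ∀ a b, P a b = Complex.I ^ (v.val * w.val) *
    ((if a = b + v then (1:ℂ) else 0) * χ (w * b))

lemma facOK_one : facOK 1 0 0 := by
  intro a b
  rcases zmod2_cases a with h | h <;> rcases zmod2_cases b with h' | h' <;>
    subst h <;> subst h' <;>
    simp [Matrix.one_apply, χ, show ((2:ZMod 2)) = 0 from by decide]

lemma facOK_X : facOK pauliX 1 0 := by
  intro a b
  rcases zmod2_cases a with h | h <;> rcases zmod2_cases b with h' | h' <;>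
    subst h <;> subst h' <;>
    norm_num [pauliX, χ, show ZMod.val (1:ZMod 2) = 1 from rfl,
      show ZMod.val (0:ZMod 2) = 0 from rfl] <;>
    first
      | rfl
      | (rw [if_pos (by decide)])
      | (rw [if_neg (by decide)])
      | decide

lemma facOK_Z : facOK pauliZ 0 1 := by
  intro a b
  rcases zmod2_cases a with h | h <;> rcases zmod2_cases b with h' | h' <;>
    subst h <;> subst h' <;>
    norm_num [pauliZ, χ, show ZMod.val (1:ZMod 2) = 1 from rfl,
      show ZMod.val (0:ZMod 2) = 0 from rfl] <;>
    first
      | rfl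
      | (rw [if_pos (by decide)])
      | (rw [if_neg (by decide)])
      | decide

lemma facOK_Y : facOK pauliY 1 1 := by
  intro a b
  rcases zmod2_cases a with h | h <;> rcases zmod2_cases b with h' | h' <;>
    subst h <;> subst h' <;>
    norm_num [pauliY, χ, show ZMod.val (1:ZMod 2) = 1 from rfl,
      show ZMod.val (0:ZMod 2) = 0 from rfl] <;>
    first
      | rfl
      | (rw [if_pos (by decide)])
      | (rw [if_neg (by decide)])
      | decide

lemma prod_fac (P : Fin n → Matrix (ZMod 2) (ZMod 2) ℂ) (v w : QIdx n)
    (hf : ∀ j, facOK (P j) (v j) (w j)) (x y : QIdx n) :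
    (∏ j, P j (x j) (y j)) =
      Complex.I ^ (∑ j, (v j).val * (w j).val) *
        ((if x = y + v then (1:ℂ) else 0) * χ (w ⬝ᵥ y)) := by
  calc (∏ j, P j (x j) (y j))
      = ∏ j, (Complex.I ^ ((v j).val * (w j).val) *
          ((if x j = y j + v j then (1:ℂ) else 0) * χ (w j * y j))) := by
        exact Finset.prod_congr rfl fun j _ => hf j (x j) (y j)
    _ = (∏ j, Complex.I ^ ((v j).val * (w j).val)) *
          ((∏ j, (if x j = y j + v j then (1:ℂ) else 0)) * (∏ j, χ (w j * y j))) := by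
        rw [Finset.prod_mul_distrib, Finset.prod_mul_distrib]
    _ = _ := by
        rw [Finset.prod_pow_eq_pow_sum, prod_ite_eq_vec, prod_χ]
        rfl

lemma pform_mem (k : ℕ) (v w : QIdx n) : pform n k v w ∈ PauliGroup n := by
  classical
  set m := ∑ j, (v j).val * (w j).val with hm
  refine ⟨Complex.I ^ (k + 3 * m),
    fun j => if v j = 0 then (if w j = 0 then 1 else pauliZ)
             else (if w j = 0 then pauliX else pauliY),
    I_pow_cases _, ?_, ?_⟩
  · intro j
    rcases zmod2_cases (v j) with h | h <;> rcases zmod2_cases (w j) with h' | h' <;>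
      simp [h, h'] <;> tauto
  · have hf : ∀ j, facOK
        (if v j = 0 then (if w j = 0 then 1 else pauliZ)
         else (if w j = 0 then pauliX else pauliY)) (v j) (w j) := by
      intro j
      rcases zmod2_cases (v j) with h | h <;> rcases zmod2_cases (w j) with h' | h' <;>
        rw [h, h'] <;> simp only [if_pos rfl, if_neg one_ne_zero] <;>
        first
          | exact facOK_one
          | exact facOK_X
          | exact facOK_Z
          | exact facOK_Y
    ext x y
    rw [Matrix.smul_apply, Matrix.of_apply, prod_fac _ v w hf x y, smul_eq_mul, ← hm,
      pform, Matrix.of_apply, ← mul_assoc (Complex.I ^ (k + 3 * m)), ← pow_add,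
      show k + 3 * m + m = k + 4 * m from by ring, pow_add, pow_mul, I_pow_four,
      one_pow, mul_one]

lemma pauli_normal {M : QMat n} (h : M ∈ PauliGroup n) :
    ∃ (k : ℕ) (v w : QIdx n), M = pform n k v w := by
  obtain ⟨ω, P, hω, hP, rfl⟩ := h
  have hfac : ∀ j, ∃ (vj wj : ZMod 2), facOK (P j) vj wj := by
    intro j
    rcases hP j with h | h | h | h <;> rw [h]
    · exact ⟨0, 0, facOK_one⟩
    · exact ⟨1, 0, facOK_X⟩
    · exact ⟨1, 1, facOK_Y⟩
    · exact ⟨0, 1, facOK_Z⟩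
  choose v w hvw using hfac
  have hωk : ∃ kω, ω = Complex.I ^ kω := by
    rcases hω with h | h | h | h
    · exact ⟨0, by rw [h, pow_zero]⟩
    · exact ⟨2, by rw [h, Complex.I_sq]⟩
    · exact ⟨1, by rw [h, pow_one]⟩
    · exact ⟨3, by rw [h, pow_succ, Complex.I_sq]; ring⟩
  obtain ⟨kω, rfl⟩ := hωk
  refine ⟨kω + ∑ j, (v j).val * (w j).val, v, w, ?_⟩
  ext x y
  rw [Matrix.smul_apply, Matrix.of_apply, smul_eq_mul, prod_fac P v w hvw x y,
    pform, Matrix.of_apply, ← mul_assoc, ← pow_add]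

section Gate

variable (n : ℕ) [NeZero n]

/-- Nilpotent shift matrix over `ZMod 2`. -/
def Nmat : Matrix (Fin n) (Fin n) (ZMod 2) :=
  Matrix.of fun i j => if (i:ℕ) + 1 = (j:ℕ) then 1 else 0

/-- Jordan block `A = 1 + N`. -/
def Amat : Matrix (Fin n) (Fin n) (ZMod 2) := 1 + Nmat n

/-- The gate: `U |y⟩ = i^{y₀} |A y⟩`, i.e. a CNOT chain followed by an S gate. -/
noncomputable def Umat : QMat n :=
  Matrix.of fun x y =>
    Complex.I ^ ((y 0).val) * (if x = (Amat n).mulVec y then (1:ℂ) else 0)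

/-- Accumulated phase exponent for `U^k`. -/
noncomputable def Sc (k : ℕ) (y : QIdx n) : ℕ :=
  ∑ j ∈ Finset.range k, ((((Amat n)^j).mulVec y) 0).val

lemma Sc_zero_vec (k : ℕ) : Sc n k 0 = 0 := by
  unfold Sc
  apply Finset.sum_eq_zero
  intro j _
  rw [Matrix.mulVec_zero]
  rfl

variable {n}

lemma matrix_add_self (M : Matrix (Fin n) (Fin n) (ZMod 2)) : M + M = 0 := by
  ext i j
  have : ∀ u : ZMod 2, u + u = 0 := by decide
  simpa using this (M i j)

lemma sq_one_add (M : Matrix (Fin n) (Fin n) (ZMod 2)) : (1 + M)^2 = 1 + M^2 := by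
  have h : (1 + M)^2 = 1 + (M + M) + M^2 := by noncomm_ring
  rw [h, matrix_add_self, add_zero]

lemma Npow (m : ℕ) : (Nmat n)^m =
    (Matrix.of fun i j => if (i:ℕ) + m = (j:ℕ) then (1:ZMod 2) else 0
      : Matrix (Fin n) (Fin n) (ZMod 2)) := by
  induction m with
  | zero =>
    ext i j
    simp [Matrix.one_apply, Fin.ext_iff]
  | succ m ih =>
    rw [pow_succ, ih]
    ext i j
    rw [Matrix.mul_apply, Matrix.of_apply]
    by_cases h : (i:ℕ) + m < n
    · rw [Finset.sum_eq_single (⟨(i:ℕ) + m, h⟩ : Fin n)]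
      · simp [Nmat, add_assoc]
      · intro b _ hb
        rw [Matrix.of_apply, if_neg, zero_mul]
        intro hc
        exact hb (by apply Fin.ext; simp [← hc])
      · intro hb; exact absurd (Finset.mem_univ _) hb
    · rw [Finset.sum_eq_zero, if_neg]
      · intro hc
        have : (j:ℕ) < n := j.isLt
        omega
      · intro b _
        rw [Matrix.of_apply, if_neg, zero_mul]
        intro hc
        have : (b:ℕ) < n := b.isLt
        omega

lemma Npow_eq_zero {m : ℕ} (hm : n ≤ m) : (Nmat n)^m = 0 := by
  rw [Npow]
  ext i j
  rw [Matrix.of_apply, if_neg]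
  · rfl
  · intro hc
    have : (j:ℕ) < n := j.isLt
    omega

lemma Apow2 (t : ℕ) : (Amat n)^(2^t) = 1 + (Nmat n)^(2^t) := by
  induction t with
  | zero => simp [Amat]
  | succ t ih =>
    have h2 : (2:ℕ)^(t+1) = 2^t * 2 := by rw [pow_succ]
    rw [h2, pow_mul, pow_mul, ih, sq_one_add, ← pow_mul]

lemma Arow0 (j : ℕ) (l : Fin n) :
    ((Amat n)^j) 0 l = ((Nat.choose j (l:ℕ) : ZMod 2)) := by
  induction j generalizing l with
  | zero =>
    rw [pow_zero, Matrix.one_apply]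
    by_cases h0 : (0 : Fin n) = l
    · rw [if_pos h0, ← h0, Fin.val_zero]
      simp
    · have hl0 : 0 < (l:ℕ) := by
        rcases Nat.eq_zero_or_pos (l:ℕ) with h | h
        · exact absurd (Fin.ext (by rw [Fin.val_zero, h])) h0
        · exact h
      rw [if_neg h0, Nat.choose_eq_zero_of_lt hl0, Nat.cast_zero]
  | succ j ih =>
    rw [pow_succ, Matrix.mul_apply]
    have hsplit : ∀ z : Fin n, ((Amat n)^j) 0 z * (Amat n) z l
        = (((Amat n)^j) 0 z * (if z = l then 1 else 0))
          + (((Amat n)^j) 0 z * (if (z:ℕ) + 1 = (l:ℕ) then 1 else 0)) := by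
      intro z
      rw [Amat, Matrix.add_apply, Matrix.one_apply, mul_add]
      rfl
    rw [Finset.sum_congr rfl fun z _ => hsplit z, Finset.sum_add_distrib]
    have h1 : (∑ z : Fin n, ((Amat n)^j) 0 z * (if z = l then 1 else 0))
        = ((Nat.choose j (l:ℕ) : ZMod 2)) := by
      rw [Finset.sum_eq_single l]
      · rw [if_pos rfl, mul_one, ih]
      · intro b _ hb; rw [if_neg hb, mul_zero]
      · intro hb; exact absurd (Finset.mem_univ _) hb
    rw [h1]
    rcases l with ⟨lv, hl⟩
    cases lv with
    | zero =>
      rw [Finset.sum_eq_zero]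
      · simp
      · intro b _
        rw [if_neg (by simp), mul_zero]
    | succ m =>
      have hm : m < n := by omega
      have h2 : (∑ z : Fin n, ((Amat n)^j) 0 z *
          (if (z:ℕ) + 1 = ((⟨m+1, hl⟩ : Fin n):ℕ) then 1 else 0))
          = ((Nat.choose j m : ZMod 2)) := by
        rw [Finset.sum_eq_single (⟨m, hm⟩ : Fin n)]
        · rw [if_pos (by simp), mul_one, ih]
        · intro b _ hb
          rw [if_neg, mul_zero]
          intro hc
          exact hb (by apply Fin.ext; simp at hc ⊢; omega)
        · intro hb; exact absurd (Finset.mem_univ _) hb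
      rw [h2]
      have : Nat.choose (j+1) (m+1) = Nat.choose j m + Nat.choose j (m+1) :=
        Nat.choose_succ_succ j m
      rw [show ((⟨m+1, hl⟩ : Fin n):ℕ) = m + 1 from rfl, this]
      push_cast
      ring

lemma Upow (k : ℕ) : (Umat n)^k = Matrix.of fun x y =>
    Complex.I ^ (Sc n k y) * (if x = ((Amat n)^k).mulVec y then (1:ℂ) else 0) := by
  induction k with
  | zero =>
    ext x y
    simp [Sc, Matrix.one_apply, Matrix.one_mulVec]
  | succ k ih =>
    rw [pow_succ, ih]
    ext x y
    rw [Matrix.mul_apply, Matrix.of_apply]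
    have hcol : ∀ z : QIdx n,
        (Matrix.of fun x y => Complex.I ^ (Sc n k y) *
          (if x = ((Amat n)^k).mulVec y then (1:ℂ) else 0)) x z * Umat n z y
        = if z = (Amat n).mulVec y then
            Complex.I ^ (Sc n k ((Amat n).mulVec y) + (y 0).val) *
              (if x = ((Amat n)^(k+1)).mulVec y then (1:ℂ) else 0)
          else 0 := by
      intro z
      by_cases hz : z = (Amat n).mulVec y
      · subst hz
        rw [if_pos rfl, Matrix.of_apply, Umat, Matrix.of_apply, if_pos rfl,
          Matrix.mulVec_mulVec, ← pow_succ, pow_add]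
        ring
      · rw [if_neg hz]
        simp [Umat, hz]
    rw [Finset.sum_congr rfl fun z _ => hcol z, Finset.sum_ite_eq' Finset.univ]
    simp only [Finset.mem_univ, if_true]
    have hS : Sc n (k+1) y = Sc n k ((Amat n).mulVec y) + (y 0).val := by
      rw [Sc, Sc, Finset.sum_range_succ']
      congr 1
      · apply Finset.sum_congr rfl
        intro j _
        rw [Matrix.mulVec_mulVec, ← pow_succ]
      · rw [pow_zero, Matrix.one_mulVec]
    rw [hS]

section Inverse

variable (B : Matrix (Fin n) (Fin n) (ZMod 2))
variable (hinv : Amat n * B = 1) (hinv2 : B * Amat n = 1)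

include hinv hinv2

lemma patt_iff (x z : QIdx n) : x = (Amat n).mulVec z ↔ z = B.mulVec x := by
  constructor
  · rintro rfl
    rw [Matrix.mulVec_mulVec, hinv2, Matrix.one_mulVec]
  · rintro rfl
    rw [Matrix.mulVec_mulVec, hinv, Matrix.one_mulVec]

lemma AB_vec (x : QIdx n) : (Amat n).mulVec (B.mulVec x) = x := by
  rw [Matrix.mulVec_mulVec, hinv, Matrix.one_mulVec]

lemma BA_vec (x : QIdx n) : B.mulVec ((Amat n).mulVec x) = x := by
  rw [Matrix.mulVec_mulVec, hinv2, Matrix.one_mulVec]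

lemma Umat_unitary : Umat n ∈ Matrix.unitaryGroup (QIdx n) ℂ := by
  rw [Matrix.mem_unitaryGroup_iff]
  ext x y
  rw [Matrix.mul_apply]
  have hstar : ∀ (yy zz : QIdx n), star (Umat n yy zz)
      = (-Complex.I) ^ ((zz 0).val) * (if yy = (Amat n).mulVec zz then (1:ℂ) else 0) := by
    intro yy zz
    rw [Umat, Matrix.of_apply]
    simp [star_mul', star_pow, Complex.conj_I, apply_ite (star : ℂ → ℂ)]
  have hterm : ∀ z : QIdx n, Umat n x z * star (Umat n y z)
      = if z = B.mulVec x then (if y = x then (1:ℂ) else 0) else 0 := by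
    intro z
    by_cases hz : z = B.mulVec x
    · subst hz
      have hx : x = (Amat n).mulVec (B.mulVec x) := (AB_vec B hinv hinv2 x).symm
      rw [if_pos rfl, hstar]
      simp only [Umat, Matrix.of_apply]
      rw [if_pos hx, mul_one, ← mul_assoc, ← mul_pow,
        show Complex.I * -Complex.I = 1 from by
          rw [mul_neg, Complex.I_mul_I, neg_neg], one_pow, one_mul, ← hx]
    · rw [if_neg hz, Umat, Matrix.of_apply, if_neg (by rw [patt_iff B hinv hinv2]; exact hz),
        mul_zero, zero_mul]
  simp only [Matrix.star_apply]
  rw [Finset.sum_congr rfl fun z _ => hterm z, Finset.sum_ite_eq' Finset.univ]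
  simp only [Finset.mem_univ, if_true, Matrix.one_apply]
  by_cases hxy : x = y
  · subst hxy; simp
  · rw [if_neg fun h => hxy h.symm, if_neg hxy]

end Inverse

end Gate

section Conj

variable {n : ℕ} [NeZero n]

lemma Ustar (yy zz : QIdx n) : star (Umat n yy zz)
    = (-Complex.I) ^ ((zz 0).val) * (if yy = (Amat n).mulVec zz then (1:ℂ) else 0) := by
  rw [Umat, Matrix.of_apply]
  simp [star_mul', star_pow, Complex.conj_I, apply_ite (star : ℂ → ℂ)]

lemma phase_fac (u t : ZMod 2) :
    (-Complex.I) ^ (u.val) * Complex.I ^ ((u + t).val)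
      = Complex.I ^ (t.val) * χ (t * u) := by
  rcases zmod2_cases u with h | h <;> rcases zmod2_cases t with h' | h' <;>
    subst h <;> subst h' <;>
    norm_num [χ, show ZMod.val (1:ZMod 2) = 1 from rfl,
      show ZMod.val (0:ZMod 2) = 0 from rfl,
      show ((1:ZMod 2) + 1) = 0 from by decide,
      show ZMod.val ((1:ZMod 2) + 1) = 0 from by decide,
      show ZMod.val (2:ZMod 2) = 0 from by decide]

variable (B : Matrix (Fin n) (Fin n) (ZMod 2))
variable (hinv : Amat n * B = 1) (hinv2 : B * Amat n = 1)
include hinv hinv2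

lemma U_mul_left (M : QMat n) : Umat n * M =
    Matrix.of fun x y => Complex.I ^ (((B.mulVec x) 0).val) * M (B.mulVec x) y := by
  ext x y
  rw [Matrix.mul_apply, Matrix.of_apply]
  have hterm : ∀ z : QIdx n, Umat n x z * M z y
      = if z = B.mulVec x then
          Complex.I ^ (((B.mulVec x) 0).val) * M (B.mulVec x) y else 0 := by
    intro z
    by_cases hz : z = B.mulVec x
    · subst hz
      have hx : x = (Amat n).mulVec (B.mulVec x) := (AB_vec B hinv hinv2 x).symm
      rw [if_pos rfl]
      simp only [Umat, Matrix.of_apply]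
      rw [if_pos hx, mul_one]
    · rw [if_neg hz]
      have hne : ¬ x = (Amat n).mulVec z := by
        rw [patt_iff B hinv hinv2]; exact hz
      simp [Umat, hne]
  rw [Finset.sum_congr rfl fun z _ => hterm z, Finset.sum_ite_eq' Finset.univ]
  simp

lemma mul_Uconj (M : QMat n) : M * (Umat n)ᴴ =
    Matrix.of fun x y => (-Complex.I) ^ (((B.mulVec y) 0).val) * M x (B.mulVec y) := by
  ext x y
  rw [Matrix.mul_apply, Matrix.of_apply]
  have hterm : ∀ z : QIdx n, M x z * (Umat n)ᴴ z y
      = if z = B.mulVec y then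
          (-Complex.I) ^ (((B.mulVec y) 0).val) * M x (B.mulVec y) else 0 := by
    intro z
    rw [Matrix.conjTranspose_apply, Ustar]
    by_cases hz : z = B.mulVec y
    · subst hz
      have hy : y = (Amat n).mulVec (B.mulVec y) := (AB_vec B hinv hinv2 y).symm
      rw [if_pos rfl, if_pos hy, mul_one]
      ring
    · have hne : ¬ y = (Amat n).mulVec z := by
        rw [patt_iff B hinv hinv2]; exact hz
      rw [if_neg hz, if_neg hne, mul_zero, mul_zero]
  rw [Finset.sum_congr rfl fun z _ => hterm z, Finset.sum_ite_eq' Finset.univ]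
  simp

lemma conj_pform (k : ℕ) (v w : QIdx n) :
    Umat n * pform n k v w * (Umat n)ᴴ =
      pform n (k + (v 0).val) ((Amat n).mulVec v)
        (Bᵀ.mulVec (w + (Pi.single (0 : Fin n) (v 0) : QIdx n))) := by
  rw [mul_Uconj B hinv hinv2, U_mul_left B hinv hinv2]
  ext x y
  simp only [Matrix.of_apply, pform]
  set x' := B.mulVec x with hx'
  set y' := B.mulVec y with hy'
  have hAx : (Amat n).mulVec x' = x := AB_vec B hinv hinv2 x
  have hAy : (Amat n).mulVec y' = y := AB_vec B hinv hinv2 y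
  have hiff : (x' = y' + v) ↔ (x = y + (Amat n).mulVec v) := by
    constructor
    · intro h
      rw [← hAx, h, Matrix.mulVec_add, hAy]
    · intro h
      rw [hx', h, Matrix.mulVec_add, Matrix.mulVec_mulVec, hinv2, Matrix.one_mulVec, ← hy']
  have hdot : (Bᵀ.mulVec (w + (Pi.single (0 : Fin n) (v 0) : QIdx n))) ⬝ᵥ y
      = w ⬝ᵥ y' + (v 0) * (y' 0) := by
    rw [Matrix.mulVec_transpose, ← Matrix.dotProduct_mulVec, ← hy', add_dotProduct,
      single_dotProduct]
  by_cases h : x' = y' + v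
  · rw [if_pos h, if_pos (hiff.mp h)]
    have h0 : x' 0 = y' 0 + v 0 := by rw [h]; rfl
    have hp := phase_fac (y' 0) (v 0)
    rw [hdot, χ_add, h0, pow_add]
    linear_combination (Complex.I ^ k * χ (w ⬝ᵥ y')) * hp
  · rw [if_neg h, if_neg (fun hc => h (hiff.mpr hc))]
    ring

lemma conj_mem {P : QMat n} (hP : P ∈ PauliGroup n) :
    Umat n * P * (Umat n)ᴴ ∈ PauliGroup n := by
  obtain ⟨k, v, w, rfl⟩ := pauli_normal hP
  rw [conj_pform B hinv hinv2]
  exact pform_mem _ _ _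

end Conj

section Parity

lemma lucas2 (a b : ℕ) : ((Nat.choose a b : ZMod 2))
    = (Nat.choose (a % 2) (b % 2) : ZMod 2) * (Nat.choose (a / 2) (b / 2) : ZMod 2) := by
  haveI : Fact (Nat.Prime 2) := ⟨Nat.prime_two⟩
  have h := Choose.choose_modEq_choose_mod_mul_choose_div_nat (n := a) (k := b) (p := 2)
  have h2 := (ZMod.natCast_eq_natCast_iff _ _ _).mpr h
  rw [h2]
  push_cast
  ring

lemma choose_two_pow_sub_one_odd (t : ℕ) : ∀ k, k < 2^t →
    ((Nat.choose (2^t - 1) k : ZMod 2)) = 1 := by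
  induction t with
  | zero =>
    intro k hk
    interval_cases k
    · simp
  | succ t ih =>
    intro k hk
    have h2 : (2:ℕ)^(t+1) = 2 * 2^t := by rw [pow_succ]; ring
    have hpos : 1 ≤ (2:ℕ)^t := Nat.one_le_two_pow
    rw [lucas2]
    have hm : (2^(t+1) - 1) % 2 = 1 := by omega
    have hd : (2^(t+1) - 1) / 2 = 2^t - 1 := by omega
    rw [hm, hd]
    have hk2 : k / 2 < 2^t := by omega
    rw [ih (k/2) hk2]
    have : k % 2 = 0 ∨ k % 2 = 1 := by omega
    rcases this with h | h <;> rw [h] <;> simp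

lemma choose_mid_even (t : ℕ) : ∀ r, r + 1 < 2^t →
    ((Nat.choose (2^t + r) (2^t - 1) : ZMod 2)) = 0 := by
  induction t with
  | zero =>
    intro r hr
    omega
  | succ t ih =>
    intro r hr
    have h2 : (2:ℕ)^(t+1) = 2 * 2^t := by rw [pow_succ]; ring
    have hpos : 1 ≤ (2:ℕ)^t := Nat.one_le_two_pow
    rw [lucas2]
    have hm : (2^(t+1) - 1) % 2 = 1 := by omega
    have hd : (2^(t+1) - 1) / 2 = 2^t - 1 := by omega
    have hm2 : (2^(t+1) + r) % 2 = r % 2 := by omega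
    have hd2 : (2^(t+1) + r) / 2 = 2^t + r / 2 := by omega
    rw [hm, hd, hm2, hd2]
    rcases (show r % 2 = 0 ∨ r % 2 = 1 from by omega) with h | h
    · rw [h]
      simp [Nat.choose_eq_zero_of_lt]
    · rw [h, ih (r/2) (by omega)]
      simp

end Parity

section Counting

variable {n : ℕ} [NeZero n]

lemma bval_single (j : ℕ) (l : Fin n) :
    ((Amat n)^j).mulVec (Pi.single l 1) 0 = ((Nat.choose j (l:ℕ) : ZMod 2)) := by
  rw [Matrix.mulVec_single]
  simp [Arow0]

lemma Sc_add_two_mul (k : ℕ) (x y : QIdx n) :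
    Sc n k (x + y) + 2 * (∑ j ∈ Finset.range k,
      ((((Amat n)^j).mulVec x 0).val * (((Amat n)^j).mulVec y 0).val))
    = Sc n k x + Sc n k y := by
  unfold Sc
  rw [Finset.mul_sum, ← Finset.sum_add_distrib, ← Finset.sum_add_distrib]
  apply Finset.sum_congr rfl
  intro j _
  rw [Matrix.mulVec_add]
  have h : ∀ p q : ZMod 2, (p + q).val + 2 * (p.val * q.val) = p.val + q.val := by decide
  simpa using h (((Amat n)^j).mulVec x 0) (((Amat n)^j).mulVec y 0)

lemma T_odd {a : ℕ} (ha : 1 ≤ a) (α β : Fin n)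
    (hα : (α:ℕ) = 2^(a-1)) (hβ : (β:ℕ) = 2^(a-1) - 1) :
    (∑ j ∈ Finset.range (2^a), ((((Amat n)^j).mulVec (Pi.single α 1) 0).val *
       (((Amat n)^j).mulVec (Pi.single β 1) 0).val)) = 1 := by
  have h2 : (2:ℕ)^a = 2 * 2^(a-1) := by
    rw [← pow_succ']
    congr 1
    omega
  have hpos : 1 ≤ (2:ℕ)^(a-1) := Nat.one_le_two_pow
  have hcong : ∀ j ∈ Finset.range (2^a),
      ((((Amat n)^j).mulVec (Pi.single α 1) 0).val *
        (((Amat n)^j).mulVec (Pi.single β 1) 0).val)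
      = ((Nat.choose j (2^(a-1)) : ZMod 2)).val *
          ((Nat.choose j (2^(a-1)-1) : ZMod 2)).val := by
    intro j _
    rw [bval_single, bval_single, hα, hβ]
  rw [Finset.sum_congr rfl hcong]
  rw [Finset.sum_eq_single_of_mem (2^a - 1) (Finset.mem_range.mpr (by omega))]
  · have h1 : ((Nat.choose (2^a - 1) (2^(a-1)) : ZMod 2)) = 1 :=
      choose_two_pow_sub_one_odd a _ (by omega)
    have hb1 : ((Nat.choose (2^a - 1) (2^(a-1)-1) : ZMod 2)) = 1 :=
      choose_two_pow_sub_one_odd a _ (by omega)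
    rw [h1, hb1]
    rfl
  · intro j hj hne
    rw [Finset.mem_range] at hj
    rcases lt_or_ge j (2^(a-1)) with h | h
    · rw [Nat.choose_eq_zero_of_lt h]
      simp
    · have hj' : j = 2^(a-1) + (j - 2^(a-1)) := by omega
      have he : ((Nat.choose j (2^(a-1)-1) : ZMod 2)) = 0 := by
        rw [hj']
        exact choose_mid_even (a-1) (j - 2^(a-1)) (by omega)
      rw [he]
      simp

end Counting
lemma χ_ne_zero (u : ZMod 2) : χ u ≠ 0 := by
  rcases zmod2_cases u with h | h <;> subst h <;> norm_num [χ]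

/-- Tightness of the Pauli-periodicity bound: for every `n > 1`
there is an `n`-qubit Clifford with Pauli periodicity exactly `⌈log₂(2n)⌉`. -/
theorem pauli_periodicity_bound_tight (n : ℕ) (hn : 1 < n) :
    ∃ U : QMat n, U ∈ CLevel n 2 ∧ HasPauliPeriodicity n (Nat.clog 2 (2 * n)) U := by
  haveI : NeZero n := ⟨by omega⟩
  set a := Nat.clog 2 n with ha
  have ha1 : 1 ≤ a := Nat.clog_pos (by norm_num) (by omega)
  have hub : n ≤ 2^a := (Nat.clog_le_iff_le_pow (by norm_num)).mp le_rfl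
  have hlb : 2^(a-1) < n := by
    have h := Nat.pow_pred_clog_lt_self (b := 2) (by norm_num) (x := n) hn
    simpa [Nat.pred_eq_sub_one] using h
  have h2a : (2:ℕ)^a = 2 * 2^(a-1) := by
    rw [← pow_succ']
    congr 1
    omega
  have hm : Nat.clog 2 (2*n) = a + 1 := by
    apply le_antisymm
    · rw [Nat.clog_le_iff_le_pow (by norm_num)]
      have h1 : (2:ℕ)^(a+1) = 2^a * 2 := pow_succ 2 a
      omega
    · have h2 : a < Nat.clog 2 (2*n) := by
        rw [Nat.lt_clog_iff_pow_lt (by norm_num)]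
        omega
      omega
  have hA2a : (Amat n)^(2^a) = 1 := by
    rw [Apow2, Npow_eq_zero hub, add_zero]
  have hpow1 : 2^a - 1 + 1 = 2^a := by
    have : 1 ≤ (2:ℕ)^a := Nat.one_le_two_pow
    omega
  set B := (Amat n)^(2^a - 1) with hB
  have hinv : Amat n * B = 1 := by
    rw [hB, ← pow_succ', hpow1]
    exact hA2a
  have hinv2 : B * Amat n = 1 := by
    rw [hB, ← pow_succ, hpow1]
    exact hA2a
  refine ⟨Umat n, ?_, ?_⟩
  · show Umat n ∈ CHaux n 1
    refine ⟨Umat_unitary B hinv hinv2, fun P hP => ?_⟩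
    show Umat n * P * (Umat n)ᴴ ∈ PauliGroup n
    exact conj_mem B hinv hinv2 hP
  · rw [hm]
    constructor
    · -- U^(2^(a+1)) is Pauli (in fact a Z-type Pauli)
      have hA2a1 : (Amat n)^(2^(a+1)) = 1 := by
        rw [pow_succ, pow_mul, hA2a, one_pow]
      have hSd : ∀ y : QIdx n, Sc n (2^(a+1)) y = 2 * Sc n (2^a) y := by
        intro y
        have h21 : (2:ℕ)^(a+1) = 2^a + 2^a := by
          have := pow_succ 2 a
          omega
        unfold Sc
        rw [h21, Finset.sum_range_add]
        have hcg : ∀ j, ((((Amat n)^(2^a + j)).mulVec y) 0).val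
            = ((((Amat n)^j).mulVec y) 0).val := by
          intro j
          rw [pow_add, hA2a, one_mul]
        rw [Finset.sum_congr rfl fun j _ => hcg j]
        omega
      refine ⟨1, pform n 0 0 (fun l => ∑ j ∈ Finset.range (2^a), ((Amat n)^j) 0 l),
        by simp, pform_mem _ _ _, ?_⟩
      rw [one_smul, Upow, hA2a1]
      ext x y
      rw [Matrix.of_apply, pform, Matrix.of_apply, hSd, I_pow_two_mul, Matrix.one_mulVec]
      have hcast : ((Sc n (2^a) y : ℕ) : ZMod 2)
          = (fun l => ∑ j ∈ Finset.range (2^a), ((Amat n)^j) 0 l) ⬝ᵥ y := by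
        unfold Sc
        push_cast [zmod2_cast_val]
        simp only [Matrix.mulVec, dotProduct, Finset.sum_mul]
        rw [Finset.sum_comm]
      rw [hcast, pow_zero, one_mul, add_zero]
      ring
    · -- no smaller power works
      intro t ht hPau
      obtain ⟨c, P, hc, hP, hUP⟩ := hPau
      obtain ⟨k, v, w, rfl⟩ := pauli_normal hP
      rw [Upow] at hUP
      have hE : ∀ x y : QIdx n, Complex.I ^ (Sc n (2^t) y) *
          (if x = ((Amat n)^(2^t)).mulVec y then (1:ℂ) else 0)
          = c * (Complex.I ^ k * ((if x = y + v then (1:ℂ) else 0) * χ (w ⬝ᵥ y))) := by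
        intro x y
        have h1 := congrArg (fun M : QMat n => M x y) hUP
        simpa [pform, Matrix.smul_apply, smul_eq_mul] using h1
      have hcne : c ≠ 0 := by
        intro h
        rw [h] at hc
        simp at hc
      have hcI : c * Complex.I ^ k ≠ 0 := mul_ne_zero hcne (I_pow_ne_zero k)
      have h00 := hE v 0
      rw [Matrix.mulVec_zero, Sc_zero_vec, pow_zero, one_mul, zero_add, if_pos rfl,
        one_mul, dotProduct_zero, χ_zero, mul_one] at h00
      have hv : v = 0 := by
        by_contra hv
        rw [if_neg hv] at h00
        exact hcI h00.symm
      subst hv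
      rw [if_pos rfl] at h00
      by_cases hta : t = a
      · subst hta
        have hD : ∀ y : QIdx n, Complex.I ^ (Sc n (2^a) y) = χ (w ⬝ᵥ y) := by
          intro y
          have h1 := hE y y
          rw [hA2a, Matrix.one_mulVec, if_pos rfl, mul_one, add_zero, if_pos rfl,
            one_mul, ← mul_assoc, ← h00, one_mul] at h1
          exact h1
        set α : Fin n := ⟨2^(a-1), hlb⟩ with hα
        have hβlt : 2^(a-1) - 1 < n := by omega
        set β : Fin n := ⟨2^(a-1) - 1, hβlt⟩ with hβ
        have hT := T_odd (n := n) ha1 α β rfl rfl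
        have hadd := Sc_add_two_mul (n := n) (2^a) (Pi.single α 1) (Pi.single β 1)
        rw [hT, mul_one] at hadd
        have e1 := hD (Pi.single α 1)
        have e2 := hD (Pi.single β 1)
        have e3 := hD (Pi.single α 1 + Pi.single β 1)
        have h4 : Complex.I ^ (Sc n (2^a) (Pi.single α 1 + Pi.single β 1) + 2)
            = Complex.I ^ (Sc n (2^a) (Pi.single α 1) + Sc n (2^a) (Pi.single β 1)) := by
          rw [hadd]
        rw [pow_add, pow_add, e1, e2, e3, dotProduct_add, χ_add] at h4
        have hne : χ (w ⬝ᵥ Pi.single α 1) * χ (w ⬝ᵥ Pi.single β 1) ≠ 0 :=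
          mul_ne_zero (χ_ne_zero _) (χ_ne_zero _)
        have h5 : Complex.I ^ 2 = 1 :=
          mul_left_cancel₀ hne (by rw [mul_one]; exact h4)
        rw [Complex.I_sq] at h5
        norm_num at h5
      · have hta' : t < a := by omega
        have h2t : 2^t < n :=
          lt_of_le_of_lt (Nat.pow_le_pow_right (by norm_num) (by omega)) hlb
        set ι : Fin n := ⟨2^t, h2t⟩ with hι
        have hι0 : ¬ ((0:Fin n) = ι) := by
          intro hcon
          have h1 := congrArg Fin.val hcon
          have hp : 0 < 2^t := pow_pos (by norm_num) t
          simp [hι] at h1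
          omega
        have hAy : ((Amat n)^(2^t)).mulVec (Pi.single ι 1)
            = Pi.single ι 1 + Pi.single (0 : Fin n) (1:ZMod 2) := by
          rw [Apow2, Matrix.add_mulVec, Matrix.one_mulVec, Npow, Matrix.mulVec_single]
          congr 1
          funext i
          rw [Pi.smul_apply, Matrix.col_apply, op_smul_eq_mul, Matrix.of_apply, mul_one,
            Pi.single_apply]
          by_cases hi : i = (0:Fin n)
          · subst hi
            rw [if_pos rfl, if_pos]
            simp [hι]
          · rw [if_neg hi, if_neg]
            intro hcon
            apply hi
            apply Fin.ext
            have h1 : (i:ℕ) + 2^t = 2^t := by simpa [hι] using hcon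
            rw [Fin.val_zero]
            omega
        have hne2 : (Pi.single ι 1 : QIdx n) + Pi.single (0:Fin n) (1:ZMod 2)
            ≠ (Pi.single ι 1 : QIdx n) := by
          intro hcon
          have h0 := congrFun hcon (0:Fin n)
          rw [Pi.add_apply, Pi.single_apply, Pi.single_apply, if_pos rfl, if_neg hι0] at h0
          rw [zero_add] at h0
          exact one_ne_zero h0
        have hEx := hE (((Amat n)^(2^t)).mulVec (Pi.single ι 1)) (Pi.single ι 1)
        rw [if_pos rfl, mul_one, add_zero, hAy, if_neg hne2, zero_mul, mul_zero,
          mul_zero] at hEx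
        exact I_pow_ne_zero _ hEx
end PauliNormal
end

section
/- Pauli periodicity of affine Clifford permutations: Let n ≥ 1, let M be an invertible n×n matrix over 𝔽₂ and φ ∈ 𝔽₂^n, and let U be the permutation unitary on C^{2^n} (with computational basis indexed by 𝔽₂^n) defined by U|a⟩ = |Ma + φ⟩ for all a ∈ 𝔽₂^n. If U^{2^m} lies in the n-qubit Pauli group 𝒫_n up to a global phase for some m ≥ 0, then M^{2^m} = I. Consequently, U^{2^{⌈log₂ n⌉}} lies in 𝒫_n up to a global phase whenever some 2-power of U does; in particular, the Pauli periodicity of any Pauli-periodic such U is at most ⌈log₂ n⌉. -/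
open Matrix

/-- The affine permutation unitary `U|a⟩ = |Ma + φ⟩` on `n` qubits. -/
def affinePermGate {n : ℕ} (M : Matrix (Fin n) (Fin n) (ZMod 2)) (φ : QIdx n) :
    QMat n :=
  Matrix.of fun a b => if a = M.mulVec b + φ then 1 else 0

section AuxProof

lemma zmod2_add_cancel : ∀ x y z : ZMod 2, x + z + y = z → x = y := by decide

lemma affinePermGate_mul {n : ℕ} (A B : Matrix (Fin n) (Fin n) (ZMod 2)) (ψ χ : QIdx n) :
    affinePermGate A ψ * affinePermGate B χ
      = affinePermGate (A * B) (A.mulVec χ + ψ) := by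
  ext a b
  rw [Matrix.mul_apply]
  simp only [affinePermGate, Matrix.of_apply, mul_ite, mul_one, mul_zero]
  rw [Finset.sum_ite_eq' Finset.univ (B.mulVec b + χ) (fun c => if a = A.mulVec c + ψ then (1:ℂ) else 0)]
  rw [if_pos (Finset.mem_univ _)]
  rw [Matrix.mulVec_add, Matrix.mulVec_mulVec, add_assoc]

lemma affinePermGate_pow {n : ℕ} (A : Matrix (Fin n) (Fin n) (ZMod 2)) (ψ : QIdx n) (k : ℕ) :
    ∃ χ : QIdx n, affinePermGate A ψ ^ k = affinePermGate (A ^ k) χ := by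
  induction k with
  | zero =>
    refine ⟨0, ?_⟩
    rw [pow_zero, pow_zero]
    ext a b
    simp [affinePermGate, Matrix.one_apply, Matrix.one_mulVec, eq_comm]
  | succ k ih =>
    obtain ⟨χ, h⟩ := ih
    exact ⟨_, by rw [pow_succ, h, affinePermGate_mul, ← pow_succ]⟩

lemma zmod2_cases_s16 : ∀ x : ZMod 2, x = 0 ∨ x = 1 := by decide

lemma pauli_sum_const {Q : Matrix (ZMod 2) (ZMod 2) ℂ}
    (hQ : Q = 1 ∨ Q = pauliX ∨ Q = pauliY ∨ Q = pauliZ)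
    {a b a' b' : ZMod 2} (h : Q a b ≠ 0) (h' : Q a' b' ≠ 0) : a + b = a' + b' := by
  rcases hQ with rfl | rfl | rfl | rfl <;>
    rcases zmod2_cases_s16 a with rfl | rfl <;> rcases zmod2_cases_s16 b with rfl | rfl <;>
    rcases zmod2_cases_s16 a' with rfl | rfl <;> rcases zmod2_cases_s16 b' with rfl | rfl <;>
      simp_all [pauliX, pauliY, pauliZ, Matrix.one_apply, Complex.I_ne_zero,
        show (1 : ZMod 2) + 1 = 0 by decide, show (0 : ZMod 2) + 1 = 1 by decide]

lemma eq_one_of_pauli {n : ℕ} (A : Matrix (Fin n) (Fin n) (ZMod 2)) (ψ : QIdx n)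
    (h : IsPauliUpToPhase n (affinePermGate A ψ)) : A = 1 := by
  obtain ⟨c, P0, hc, ⟨ω, P, hω, hP, rfl⟩, hEq⟩ := h
  have hc0 : c ≠ 0 := by
    intro h0; rw [h0] at hc; simp at hc
  have key : ∀ b : QIdx n, ∀ j, P j ((A.mulVec b + ψ) j) (b j) ≠ 0 := by
    intro b j hj
    have h1 : affinePermGate A ψ (A.mulVec b + ψ) b = 1 := by
      simp [affinePermGate]
    rw [hEq] at h1
    simp only [Matrix.smul_apply, Matrix.of_apply, smul_eq_mul] at h1
    rw [Finset.prod_eq_zero (Finset.mem_univ j) hj] at h1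
    simp at h1
  have hfix : ∀ b : QIdx n, A.mulVec b = b := by
    intro b
    funext j
    have k1 := pauli_sum_const (hP j) (key b j) (key 0 j)
    simp only [Pi.add_apply, Matrix.mulVec_zero, Pi.zero_apply, zero_add, add_zero] at k1
    exact zmod2_add_cancel _ _ _ k1
  ext i j
  have h2 := congrFun (hfix (Pi.single j 1)) i
  simp only [Matrix.mulVec_single_one, Matrix.col_apply, mul_one, Pi.single_apply] at h2
  rw [h2, Matrix.one_apply]

lemma pauliFactor (e x y : ZMod 2) :
    (if e = 0 then (1 : Matrix (ZMod 2) (ZMod 2) ℂ) else pauliX) x y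
      = if x = y + e then 1 else 0 := by
  rcases zmod2_cases_s16 e with rfl | rfl <;> rcases zmod2_cases_s16 x with rfl | rfl <;>
    rcases zmod2_cases_s16 y with rfl | rfl <;>
    simp [pauliX, Matrix.one_apply, show (1 : ZMod 2) + 1 = 0 by decide,
      show (0 : ZMod 2) ≠ 1 by decide, show (1 : ZMod 2) ≠ 0 by decide]

lemma pauli_of_one {n : ℕ} (ψ : QIdx n) :
    IsPauliUpToPhase n (affinePermGate (1 : Matrix (Fin n) (Fin n) (ZMod 2)) ψ) := by
  refine ⟨1, affinePermGate 1 ψ, by simp, ?_, (one_smul _ _).symm⟩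
  refine ⟨1, fun j => if ψ j = 0 then 1 else pauliX, Or.inl rfl,
    fun j => by by_cases hj : ψ j = 0 <;> simp [hj], ?_⟩
  ext a b
  simp only [one_smul, Matrix.of_apply, affinePermGate, Matrix.one_mulVec, pauliFactor]
  by_cases h : a = b + ψ
  · rw [if_pos h]
    exact (Finset.prod_eq_one fun j _ => if_pos (show a j = b j + ψ j by rw [h]; rfl)).symm
  · rw [if_neg h]
    have hex : ∃ j, a j ≠ b j + ψ j := by
      by_contra hc
      push_neg at hc
      exact h (funext hc)
    obtain ⟨j, hj⟩ := hex
    refine (Finset.prod_eq_zero (Finset.mem_univ j) ?_).symm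
    exact if_neg hj

lemma nilpotent_pow_card {n : ℕ} (N : Matrix (Fin n) (Fin n) (ZMod 2))
    (h : IsNilpotent N) : N ^ n = 0 := by
  have h1 := Matrix.isNilpotent_charpoly_sub_pow_of_isNilpotent h
  have h2 : N.charpoly = Polynomial.X ^ (Fintype.card (Fin n)) := by
    rw [← sub_eq_zero]; exact h1.eq_zero
  have h3 := N.aeval_self_charpoly
  rw [h2] at h3
  simpa using h3

lemma pow_clog_eq_one {n : ℕ} (hn : 1 ≤ n) (A : Matrix (Fin n) (Fin n) (ZMod 2))
    (m : ℕ) (h : A ^ 2 ^ m = 1) : A ^ 2 ^ Nat.clog 2 n = 1 := by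
  haveI : Nonempty (Fin n) := ⟨⟨0, hn⟩⟩
  haveI : Fact (Nat.Prime 2) := ⟨Nat.prime_two⟩
  have hone : (1 : Matrix (Fin n) (Fin n) (ZMod 2)) + 1 = 0 := by
    have h2 := CharP.cast_eq_zero (Matrix (Fin n) (Fin n) (ZMod 2)) 2
    rw [Nat.cast_ofNat] at h2
    rw [one_add_one_eq_two, h2]
  have hN : (A + 1) ^ 2 ^ m = 0 := by
    rw [add_pow_char_pow_of_commute (p := 2) (n := m) (Commute.one_right A), h, one_pow, hone]
  have hpow : (A + 1) ^ n = 0 := nilpotent_pow_card _ ⟨_, hN⟩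
  have h2 : (A + 1) ^ 2 ^ Nat.clog 2 n = 0 :=
    pow_eq_zero_of_le (Nat.le_pow_clog one_lt_two n) hpow
  have hA : A = (A + 1) + 1 := by rw [add_assoc, hone, add_zero]
  rw [hA, add_pow_char_pow_of_commute (p := 2) (n := Nat.clog 2 n) (Commute.one_right (A + 1)), h2, one_pow, zero_add]

end AuxProof

/-- Pauli periodicity of affine Clifford permutations: for the
permutation unitary `U|a⟩ = |Ma + φ⟩` with `M` invertible over `𝔽₂`:
(1) if `U^(2^m)` is Pauli up to phase then `M^(2^m) = 1`;
(2) if some 2-power of `U` is Pauli up to phase then `U^(2^⌈log₂ n⌉)` is;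
(3) any Pauli periodicity of `U` is at most `⌈log₂ n⌉`. -/


theorem affine_perm_pauli_periodicity (n : ℕ) (hn : 1 ≤ n)
    (M : Matrix (Fin n) (Fin n) (ZMod 2)) (hM : IsUnit M) (φ : QIdx n) :
    (∀ m : ℕ, IsPauliUpToPhase n (affinePermGate M φ ^ 2 ^ m) → M ^ 2 ^ m = 1) ∧
    ((∃ m : ℕ, IsPauliUpToPhase n (affinePermGate M φ ^ 2 ^ m)) →
      IsPauliUpToPhase n (affinePermGate M φ ^ 2 ^ Nat.clog 2 n)) ∧
    (∀ m : ℕ, HasPauliPeriodicity n m (affinePermGate M φ) → m ≤ Nat.clog 2 n) := by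
  have part1 : ∀ m : ℕ, IsPauliUpToPhase n (affinePermGate M φ ^ 2 ^ m) → M ^ 2 ^ m = 1 := by
    intro m hm
    obtain ⟨χ, hχ⟩ := affinePermGate_pow M φ (2 ^ m)
    rw [hχ] at hm
    exact eq_one_of_pauli _ _ hm
  have part2 : (∃ m : ℕ, IsPauliUpToPhase n (affinePermGate M φ ^ 2 ^ m)) →
      IsPauliUpToPhase n (affinePermGate M φ ^ 2 ^ Nat.clog 2 n) := by
    rintro ⟨m, hm⟩
    have hM1 : M ^ 2 ^ Nat.clog 2 n = 1 := pow_clog_eq_one hn M m (part1 m hm)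
    obtain ⟨χ, hχ⟩ := affinePermGate_pow M φ (2 ^ Nat.clog 2 n)
    rw [hχ, hM1]
    exact pauli_of_one χ
  refine ⟨part1, part2, ?_⟩
  intro m hm
  by_contra hlt
  push_neg at hlt
  exact hm.2 (Nat.clog 2 n) hlt (part2 ⟨m, hm.1⟩)
end
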